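/- arXiv:2511.06566 — 4 statements merged into one kernel-verified Lean document; each statement's English description precedes it below -/
import Mathlib

section
/- Let W be an n×n complex symmetric matrix with positive semidefinite real part such that ε²Id + 2W is invertible for ε > 0. Then the n-dimensional Gaussian integral ∫_{ℝⁿ} exp(2i t·x) exp(−tᵀ(ε²Id + 2W)t) dt equals (πⁿ / det(ε²Id + 2W))^{1/2} · exp(−xᵀ(ε²Id + 2W)⁻¹ x) for every x ∈ ℂⁿ, where the square root of the determinant is taken with the branch continuous in W from W = 0. -/
open MeasureTheory Matrix Complex

namespace CGaussAux

variable {n : ℕ}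

lemma sumsq_nonneg (v : Fin n → ℝ) : 0 ≤ ∑ i, v i ^ 2 :=
  Finset.sum_nonneg fun _ _ => sq_nonneg _

lemma sumsq_pos {v : Fin n → ℝ} (hv : v ≠ 0) : 0 < ∑ i, v i ^ 2 := by
  obtain ⟨k, hk⟩ := Function.ne_iff.mp hv
  have h1 : 0 < |v k| := abs_pos.mpr hk
  have h2 := pow_pos h1 2
  rw [_root_.sq_abs] at h2
  exact Finset.sum_pos' (fun i _ => sq_nonneg _) ⟨k, Finset.mem_univ k, h2⟩

lemma sq_le_sumsq (v : Fin n → ℝ) (k : Fin n) : v k ^ 2 ≤ ∑ i, v i ^ 2 :=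
  Finset.single_le_sum (fun i _ => sq_nonneg (v i)) (Finset.mem_univ k)

lemma qd_abs_le (B : Matrix (Fin n) (Fin n) ℝ) (v : Fin n → ℝ) :
    |∑ i, ∑ j, v i * B i j * v j| ≤ (∑ i, ∑ j, |B i j|) * ∑ i, v i ^ 2 := by
  calc |∑ i, ∑ j, v i * B i j * v j| ≤ ∑ i, |∑ j, v i * B i j * v j| :=
        Finset.abs_sum_le_sum_abs _ _
    _ ≤ ∑ i, ∑ j, |v i * B i j * v j| :=
        Finset.sum_le_sum fun i _ => Finset.abs_sum_le_sum_abs _ _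
    _ ≤ ∑ i, ∑ j, |B i j| * ∑ k, v k ^ 2 := by
        refine Finset.sum_le_sum fun i _ => Finset.sum_le_sum fun j _ => ?_
        have h1 : |v i * B i j * v j| = |B i j| * (|v i| * |v j|) := by
          rw [abs_mul, abs_mul]; ring
        rw [h1]
        refine mul_le_mul_of_nonneg_left ?_ (abs_nonneg _)
        have h2 : |v i| * |v j| ≤ (v i ^ 2 + v j ^ 2) / 2 := by
          nlinarith [sq_nonneg (|v i| - |v j|), _root_.sq_abs (v i), _root_.sq_abs (v j)]
        refine h2.trans ?_
        have := sq_le_sumsq v i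
        have := sq_le_sumsq v j
        linarith
    _ = (∑ i, ∑ j, |B i j|) * ∑ i, v i ^ 2 := by
        rw [Finset.sum_mul]; congr 1; ext i; rw [Finset.sum_mul]

lemma gauss_decay_integrable {b : ℝ} (hb : 0 < b) (a : ℝ) :
    Integrable (fun t : Fin n → ℝ => Real.exp (a - b * ∑ i, t i ^ 2)) := by
  have I1 : Integrable (fun v : Fin n → ℝ =>
      Complex.exp (-∑ i, (b : ℂ) * (v i : ℂ) ^ 2 + ∑ i, (0 : ℂ) * (v i : ℂ))) :=
    GaussianFourier.integrable_cexp_neg_sum_mul_add (fun i => by simpa using hb) _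
  have I2 := (I1.norm.const_mul (Real.exp a))
  refine I2.congr (Filter.Eventually.of_forall fun t => ?_)
  have h : ∀ i : Fin n, ((b : ℂ) * (t i : ℂ) ^ 2).re = b * t i ^ 2 := by
    intro i
    have : ((b : ℂ) * (t i : ℂ) ^ 2) = ((b * t i ^ 2 : ℝ) : ℂ) := by push_cast; ring
    rw [this, Complex.ofReal_re]
  have hnorm : ‖Complex.exp (-∑ i, (b : ℂ) * (t i : ℂ) ^ 2 + ∑ i, (0 : ℂ) * (t i : ℂ))‖
      = Real.exp (-(b * ∑ i, t i ^ 2)) := by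
    rw [Complex.norm_exp]
    have hc : (-∑ i, (b : ℂ) * (t i : ℂ) ^ 2 + ∑ i, (0 : ℂ) * (t i : ℂ))
        = ((-(b * ∑ i, t i ^ 2) : ℝ) : ℂ) := by push_cast; simp [Finset.mul_sum]
    rw [hc, Complex.ofReal_re]
  simp only [hnorm, ← Real.exp_add]
  ring_nf

end CGaussAux

namespace CGaussAux
variable {n : ℕ}

/-- The exponent appearing in the Gaussian integral. -/
noncomputable def expo (M : Matrix (Fin n) (Fin n) ℂ) (x : Fin n → ℂ) (t : Fin n → ℝ) : ℂ :=
  2 * Complex.I * ∑ i, (t i : ℂ) * x i - ∑ i, ∑ j, (t i : ℂ) * M i j * (t j : ℂ)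

lemma expo_re (M : Matrix (Fin n) (Fin n) ℂ) (x : Fin n → ℂ) (t : Fin n → ℝ) :
    (expo M x t).re
      = -2 * ∑ i, t i * (x i).im - ∑ i, ∑ j, t i * (M i j).re * t j := by
  unfold expo
  rw [sub_re]
  congr 1
  · have h1 : (2 * Complex.I * ∑ i, (t i : ℂ) * x i).re
        = -2 * (∑ i, (t i : ℂ) * x i).im := by
      simp [Complex.mul_re, Complex.mul_im]
    rw [h1, im_sum, Finset.mul_sum, Finset.mul_sum]
    refine Finset.sum_congr rfl fun i _ => ?_
    simp [Complex.mul_im]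
  · rw [re_sum]
    refine Finset.sum_congr rfl fun i _ => ?_
    rw [re_sum]
    refine Finset.sum_congr rfl fun j _ => ?_
    simp [Complex.mul_re, Complex.mul_im]

lemma norm_exp_expo_le (M : Matrix (Fin n) (Fin n) ℂ) (x : Fin n → ℂ) {c : ℝ} (hc : 0 < c)
    (hre : ∀ v : Fin n → ℝ, c * ∑ i, v i ^ 2 ≤ ∑ i, ∑ j, v i * (M i j).re * v j)
    (t : Fin n → ℝ) :
    ‖Complex.exp (expo M x t)‖
      ≤ Real.exp ((2 / c) * ∑ i, (x i).im ^ 2 - (c / 2) * ∑ i, t i ^ 2) := by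
  rw [Complex.norm_exp, Real.exp_le_exp, expo_re]
  have key : ∀ a b : ℝ, -2 * (a * b) ≤ (c / 2) * a ^ 2 + (2 / c) * b ^ 2 := by
    intro a b
    have h3 : (0:ℝ) ≤ (c * a + 2 * b) ^ 2 := sq_nonneg _
    have h4 : (c / 2) * a ^ 2 + (2 / c) * b ^ 2 + 2 * (a * b) = (c * a + 2 * b) ^ 2 / (2 * c) := by
      field_simp
      ring
    have h5 : (0:ℝ) ≤ (c * a + 2 * b) ^ 2 / (2 * c) := div_nonneg h3 (by linarith)
    linarith
  have h1 : -2 * ∑ i, t i * (x i).im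
      ≤ (c / 2) * ∑ i, t i ^ 2 + (2 / c) * ∑ i, (x i).im ^ 2 := by
    rw [Finset.mul_sum, Finset.mul_sum, Finset.mul_sum, ← Finset.sum_add_distrib]
    exact Finset.sum_le_sum fun i _ => key (t i) ((x i).im)
  have h2 := hre t
  linarith

lemma continuous_expo (M : Matrix (Fin n) (Fin n) ℂ) (x : Fin n → ℂ) :
    Continuous fun t : Fin n → ℝ => expo M x t := by
  unfold expo
  fun_prop

lemma integrable_exp_expo (M : Matrix (Fin n) (Fin n) ℂ) (x : Fin n → ℂ) {c : ℝ} (hc : 0 < c)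
    (hre : ∀ v : Fin n → ℝ, c * ∑ i, v i ^ 2 ≤ ∑ i, ∑ j, v i * (M i j).re * v j) :
    Integrable (fun t : Fin n → ℝ => Complex.exp (expo M x t)) :=
  (gauss_decay_integrable (by positivity) _).mono'
    ((Complex.continuous_exp.comp (continuous_expo M x)).aestronglyMeasurable)
    (Filter.Eventually.of_forall (norm_exp_expo_le M x hc hre))

end CGaussAux

namespace CGaussAux
variable {n : ℕ}

lemma dot_eq_qd_real (P : Matrix (Fin n) (Fin n) ℝ) (v w : Fin n → ℝ) :
    v ⬝ᵥ P *ᵥ w = ∑ i, ∑ j, v i * P i j * w j := by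
  simp [dotProduct, Matrix.mulVec, Finset.mul_sum, mul_assoc]

lemma det_pos_ne_zero (P : Matrix (Fin n) (Fin n) ℝ) {c : ℝ} (hc : 0 < c)
    (hbd : ∀ v : Fin n → ℝ, c * ∑ i, v i ^ 2 ≤ ∑ i, ∑ j, v i * P i j * v j) :
    P.det ≠ 0 := by
  intro h
  obtain ⟨v, hv, hMv⟩ := (Matrix.exists_mulVec_eq_zero_iff).mpr h
  have h1 := hbd v
  rw [← dot_eq_qd_real, hMv, dotProduct_zero] at h1
  have h2 := sumsq_pos hv
  nlinarith

lemma base (P : Matrix (Fin n) (Fin n) ℝ) (hsym : P.IsSymm) {c : ℝ} (hc : 0 < c)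
    (hbd : ∀ v : Fin n → ℝ, c * ∑ i, v i ^ 2 ≤ ∑ i, ∑ j, v i * P i j * v j) (x : Fin n → ℂ) :
    (∫ t : Fin n → ℝ, Complex.exp (expo (P.map Complex.ofReal) x t)) ^ 2
        * (P.map Complex.ofReal).det
      = (Real.pi : ℂ) ^ n
        * Complex.exp (-∑ i, ∑ j, x i * ((P.map Complex.ofReal)⁻¹ i j) * x j) ^ 2 := by
  classical
  have hP : P.PosSemidef := by
    refine Matrix.PosSemidef.of_dotProduct_mulVec_nonneg ?_ fun v => ?_
    · rwa [Matrix.IsHermitian, conjTranspose_eq_transpose_of_trivial]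
    · have h := hbd v
      have h0 : 0 ≤ c * ∑ i, v i ^ 2 := mul_nonneg hc.le (sumsq_nonneg v)
      rw [star_trivial, dot_eq_qd_real]
      linarith
  set B : Matrix (Fin n) (Fin n) ℝ := (open MatrixOrder in CFC.sqrt P) with hBdef
  have hBB : B * B = P := by open MatrixOrder in exact CFC.sqrt_mul_sqrt_self P hP.nonneg
  have hBsym : Bᵀ = B := by
    have h := (open MatrixOrder in (CFC.sqrt_nonneg P).posSemidef).isHermitian
    rwa [Matrix.IsHermitian, conjTranspose_eq_transpose_of_trivial] at h
  have hdetP : P.det ≠ 0 := det_pos_ne_zero P hc hbd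
  have hdetBB : B.det * B.det = P.det := by rw [← Matrix.det_mul, hBB]
  have hdetB : B.det ≠ 0 := fun h => hdetP (by rw [← hdetBB, h, zero_mul])
  have hBu : IsUnit B.det := isUnit_iff_ne_zero.mpr hdetB
  have hBBinv : B * B⁻¹ = 1 := Matrix.mul_nonsing_inv B hBu
  have hdetBinv : (B⁻¹).det ≠ 0 := by
    rw [Matrix.det_nonsing_inv, Ring.inverse_eq_inv']
    exact inv_ne_zero hdetB
  set g : (Fin n → ℝ) → ℂ := fun t => Complex.exp (expo (P.map Complex.ofReal) x t) with hg
  have hgc : Continuous g := Complex.continuous_exp.comp (continuous_expo _ x)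
  have hmap := Real.map_matrix_volume_pi_eq_smul_volume_pi (M := B⁻¹) hdetBinv
  have hcov : ∫ s : Fin n → ℝ, g (B⁻¹ *ᵥ s) = |B.det| • ∫ t, g t := by
    have h1 : ∫ y, g y ∂(Measure.map (Matrix.toLin' B⁻¹) volume)
        = ∫ s : Fin n → ℝ, g (B⁻¹ *ᵥ s) := by
      rw [MeasureTheory.integral_map]
      · simp only [Matrix.toLin'_apply]
      · exact (Matrix.toLin'
          (B⁻¹ : Matrix (Fin n) (Fin n) ℝ)).continuous_of_finiteDimensional.aemeasurable
      · rw [hmap]; exact hgc.aestronglyMeasurable.smul_measure _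
    rw [← h1, hmap, MeasureTheory.integral_smul_measure]
    congr 1
    rw [ENNReal.toReal_ofReal (by positivity)]
    rw [Matrix.det_nonsing_inv, Ring.inverse_eq_inv']
    simp [abs_inv]
  have hcov' : ∫ t, g t = (|B.det|⁻¹ : ℝ) • ∫ s : Fin n → ℝ, g (B⁻¹ *ᵥ s) := by
    rw [hcov, smul_smul, inv_mul_cancel₀ (abs_ne_zero.mpr hdetB), one_smul]
  set y : Fin n → ℂ := fun j => ∑ i, ((B⁻¹ i j : ℝ) : ℂ) * x i with hy
  have hexpo : ∀ s : Fin n → ℝ, expo (P.map Complex.ofReal) x (B⁻¹ *ᵥ s)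
      = -∑ j, (1:ℂ) * (s j : ℂ) ^ 2 + ∑ j, (2 * Complex.I * y j) * (s j : ℂ) := by
    intro s
    unfold expo
    have hquad : (∑ i, ∑ j, (((B⁻¹ *ᵥ s) i : ℝ) : ℂ) * (P.map Complex.ofReal) i j
          * (((B⁻¹ *ᵥ s) j : ℝ) : ℂ))
        = ((∑ i, ∑ j, (B⁻¹ *ᵥ s) i * P i j * (B⁻¹ *ᵥ s) j : ℝ) : ℂ) := by
      push_cast
      simp [Matrix.map_apply]
    have hmv : P *ᵥ (B⁻¹ *ᵥ s) = B *ᵥ s := by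
      rw [Matrix.mulVec_mulVec, ← hBB, Matrix.mul_assoc, hBBinv, Matrix.mul_one]
    have hreal : ∑ i, ∑ j, (B⁻¹ *ᵥ s) i * P i j * (B⁻¹ *ᵥ s) j = ∑ j, s j ^ 2 := by
      rw [← dot_eq_qd_real, hmv, Matrix.dotProduct_mulVec]
      have h2 : (B⁻¹ *ᵥ s) ᵥ* B = s := by
        have h3 : (B⁻¹ *ᵥ s) ᵥ* B = Bᵀ *ᵥ (B⁻¹ *ᵥ s) :=
          (Matrix.mulVec_transpose B (B⁻¹ *ᵥ s)).symm
        rw [h3, hBsym, Matrix.mulVec_mulVec, hBBinv, Matrix.one_mulVec]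
      rw [h2]
      simp [dotProduct, pow_two]
    have hlin : ∑ i, (((B⁻¹ *ᵥ s) i : ℝ) : ℂ) * x i = ∑ j, y j * (s j : ℂ) := by
      calc ∑ i, (((B⁻¹ *ᵥ s) i : ℝ) : ℂ) * x i
          = ∑ i, ∑ j, ((B⁻¹ i j : ℝ) : ℂ) * (s j : ℂ) * x i := by
            refine Finset.sum_congr rfl fun i _ => ?_
            have h3 : (((B⁻¹ *ᵥ s) i : ℝ) : ℂ) = ∑ j, ((B⁻¹ i j : ℝ) : ℂ) * (s j : ℂ) := by
              simp [Matrix.mulVec, dotProduct]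
            rw [h3, Finset.sum_mul]
        _ = ∑ j, ∑ i, ((B⁻¹ i j : ℝ) : ℂ) * (s j : ℂ) * x i := Finset.sum_comm
        _ = ∑ j, y j * (s j : ℂ) := by
            refine Finset.sum_congr rfl fun j _ => ?_
            rw [hy, Finset.sum_mul]
            exact Finset.sum_congr rfl fun i _ => by ring
    rw [hquad, hreal, hlin]
    rw [Finset.mul_sum]
    push_cast
    have h4 : ∀ j, 2 * Complex.I * (y j * (s j : ℂ)) = 2 * Complex.I * y j * (s j : ℂ) := by
      intro j; ring
    simp only [h4, one_mul]
    ring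
  have hint := GaussianFourier.integral_cexp_neg_sum_mul_add (ι := Fin n)
    (b := fun _ => (1:ℂ)) (fun i => by norm_num) (fun j => 2 * Complex.I * y j)
  have hI : ∫ s : Fin n → ℝ, g (B⁻¹ *ᵥ s)
      = ((Real.pi : ℂ) ^ (1/2 : ℂ)) ^ n * Complex.exp (-∑ j, y j ^ 2) := by
    have : ∀ s : Fin n → ℝ, g (B⁻¹ *ᵥ s)
        = Complex.exp (-∑ j, (1:ℂ) * (s j : ℂ) ^ 2 + ∑ j, (2 * Complex.I * y j) * (s j : ℂ)) := by
      intro s; rw [hg]; simp only []; rw [hexpo s]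
    rw [integral_congr_ae (Filter.Eventually.of_forall this), hint]
    rw [Finset.prod_mul_distrib, Finset.prod_const, Finset.card_univ, Fintype.card_fin,
      ← Complex.exp_sum]
    congr 1
    · norm_num
    · congr 1
      rw [← Finset.sum_neg_distrib]
      refine Finset.sum_congr rfl fun j _ => ?_
      have h5 : (2 * Complex.I * y j) ^ 2 / (4 * 1) = -y j ^ 2 := by
        have : (2 * Complex.I * y j) ^ 2 = -4 * y j ^ 2 := by
          rw [mul_pow, mul_pow, Complex.I_sq]; ring
        rw [this]; ring
      rw [h5]
  -- the key sum identity
  have hysum : ∑ j, y j ^ 2 = ∑ i, ∑ j, x i * ((P.map Complex.ofReal)⁻¹ i j) * x j := by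
    set C : Matrix (Fin n) (Fin n) ℂ := (B⁻¹).map Complex.ofReal with hC
    have hCsym : ∀ i j, C i j = C j i := by
      intro i j
      have h1 : (B⁻¹)ᵀ = B⁻¹ := by rw [Matrix.transpose_nonsing_inv, hBsym]
      have h2 : B⁻¹ j i = B⁻¹ i j := congrFun (congrFun h1 i) j
      simp [hC, Matrix.map_apply, h2]
    have hmapmul : ∀ (X Y : Matrix (Fin n) (Fin n) ℝ),
        (X * Y).map Complex.ofReal = X.map Complex.ofReal * Y.map Complex.ofReal := by
      intro X Y
      ext i j
      simp [Matrix.mul_apply, Matrix.map_apply]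
    have hPinv : (P.map Complex.ofReal)⁻¹ = C * C := by
      apply Matrix.inv_eq_right_inv
      have h6 : P * (B⁻¹ * B⁻¹) = 1 := by
        rw [← hBB, Matrix.mul_assoc, ← Matrix.mul_assoc B B⁻¹ B⁻¹, hBBinv, Matrix.one_mul, hBBinv]
      calc P.map Complex.ofReal * (C * C) = (P * (B⁻¹ * B⁻¹)).map Complex.ofReal := by
            rw [hC, hmapmul, hmapmul]
        _ = 1 := by rw [h6]; exact Matrix.map_one _ Complex.ofReal_zero Complex.ofReal_one
    have hyC : ∀ k, y k = ∑ i, C i k * x i := by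
      intro k; rw [hy]; exact Finset.sum_congr rfl fun i _ => by simp [hC, Matrix.map_apply]
    calc ∑ k, y k ^ 2 = ∑ k, ∑ i, ∑ j, (C i k * x i) * (C j k * x j) := by
          refine Finset.sum_congr rfl fun k _ => ?_
          rw [pow_two, hyC k, Finset.sum_mul]
          exact Finset.sum_congr rfl fun i _ => by rw [Finset.mul_sum]
      _ = ∑ i, ∑ k, ∑ j, (C i k * x i) * (C j k * x j) := Finset.sum_comm
      _ = ∑ i, ∑ j, ∑ k, (C i k * x i) * (C j k * x j) := by
          exact Finset.sum_congr rfl fun i _ => Finset.sum_comm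
      _ = ∑ i, ∑ j, x i * ((P.map Complex.ofReal)⁻¹ i j) * x j := by
          refine Finset.sum_congr rfl fun i _ => Finset.sum_congr rfl fun j _ => ?_
          rw [hPinv, Matrix.mul_apply, Finset.mul_sum, Finset.sum_mul]
          refine Finset.sum_congr rfl fun k _ => ?_
          rw [hCsym k j]
          ring
  have hdetPc : (P.map Complex.ofReal).det = ((P.det : ℝ) : ℂ) := by
    have h := RingHom.map_det Complex.ofRealHom P
    simp only [RingHom.mapMatrix_apply] at h
    exact h.symm
  have hπ : (Real.pi : ℂ) ≠ 0 := Complex.ofReal_ne_zero.mpr Real.pi_ne_zero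
  have hpc : ((Real.pi : ℂ) ^ (1/2 : ℂ)) ^ 2 = (Real.pi : ℂ) := by
    rw [pow_two, ← Complex.cpow_add _ _ hπ]
    norm_num
  rw [hcov', hI, hdetPc, ← hysum]
  rw [Complex.real_smul]
  have hone : ((|B.det|⁻¹ : ℝ) : ℂ) ^ 2 * ((P.det : ℝ) : ℂ) = 1 := by
    rw [← hdetBB]
    push_cast
    rw [inv_pow]
    have habs : ((|B.det| : ℝ) : ℂ) ^ 2 = ((B.det : ℝ) : ℂ) ^ 2 := by
      norm_cast
      exact sq_abs _
    rw [habs]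
    have hBc : ((B.det : ℝ) : ℂ) ≠ 0 := Complex.ofReal_ne_zero.mpr hdetB
    field_simp
  calc (((|B.det|⁻¹ : ℝ) : ℂ) * (((Real.pi : ℂ) ^ (1/2 : ℂ)) ^ n
          * Complex.exp (-∑ j, y j ^ 2))) ^ 2 * ((P.det : ℝ) : ℂ)
      = (((|B.det|⁻¹ : ℝ) : ℂ) ^ 2 * ((P.det : ℝ) : ℂ))
          * ((((Real.pi : ℂ) ^ (1/2 : ℂ)) ^ 2) ^ n * Complex.exp (-∑ j, y j ^ 2) ^ 2) := by
        rw [mul_pow, mul_pow, ← pow_right_comm]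
        ring
    _ = (Real.pi : ℂ) ^ n * Complex.exp (-∑ j, y j ^ 2) ^ 2 := by
        rw [hone, hpc, one_mul]

end CGaussAux

namespace CGaussAux
variable {n : ℕ}

lemma differentiable_det {B : ℂ → Matrix (Fin n) (Fin n) ℂ}
    (hB : ∀ i j, Differentiable ℂ fun w => B w i j) :
    Differentiable ℂ fun w => (B w).det := by
  have h : (fun w => (B w).det)
      = fun w => ∑ σ : Equiv.Perm (Fin n), ((Equiv.Perm.sign σ : ℤ) : ℂ) * ∏ i, B w (σ i) i := by
    funext w
    rw [Matrix.det_apply']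
  rw [h]
  intro z
  refine DifferentiableAt.fun_sum fun σ _ => DifferentiableAt.const_mul ?_ _
  exact DifferentiableAt.fun_finsetProd fun i _ => (hB (σ i) i) z

lemma differentiable_adjugate {B : ℂ → Matrix (Fin n) (Fin n) ℂ}
    (hB : ∀ i j, Differentiable ℂ fun w => B w i j) (i j : Fin n) :
    Differentiable ℂ fun w => (B w).adjugate i j := by
  have h : (fun w => (B w).adjugate i j)
      = fun w => ((B w).updateRow j (Pi.single i 1)).det := by
    funext w; rw [Matrix.adjugate_apply]
  rw [h]
  apply differentiable_det
  intro k l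
  by_cases hk : k = j
  · simp [Matrix.updateRow_apply, hk]
  · simp only [Matrix.updateRow_apply, if_neg hk]
    exact hB k l

lemma det_ne_zero_complex (M : Matrix (Fin n) (Fin n) ℂ)
    (hsym : ∀ i j, M i j = M j i) {c : ℝ} (hc : 0 < c)
    (hre : ∀ v : Fin n → ℝ, c * ∑ i, v i ^ 2 ≤ ∑ i, ∑ j, v i * (M i j).re * v j) :
    M.det ≠ 0 := by
  intro h
  obtain ⟨v, hv, hMv⟩ := Matrix.exists_mulVec_eq_zero_iff.mpr h
  set a : Fin n → ℝ := fun i => (v i).re with ha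
  set b : Fin n → ℝ := fun i => (v i).im with hb
  have hre0 : (∑ i, (starRingEnd ℂ) (v i) * (M *ᵥ v) i).re = 0 := by
    rw [hMv]; simp
  have hexp : (∑ i, (starRingEnd ℂ) (v i) * (M *ᵥ v) i).re
      = (∑ i, ∑ j, a i * (M i j).re * a j) + (∑ i, ∑ j, b i * (M i j).re * b j)
        + ((∑ i, ∑ j, (M i j).im * (b i * a j)) - (∑ i, ∑ j, (M i j).im * (a i * b j))) := by
    rw [re_sum]
    have hterm : ∀ i, ((starRingEnd ℂ) (v i) * (M *ᵥ v) i).re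
        = ∑ j, (a i * (M i j).re * a j + b i * (M i j).re * b j
            + ((M i j).im * (b i * a j) - (M i j).im * (a i * b j))) := by
      intro i
      have h1 : (M *ᵥ v) i = ∑ j, M i j * v j := by simp [Matrix.mulVec, dotProduct]
      rw [h1, Finset.mul_sum, re_sum]
      refine Finset.sum_congr rfl fun j _ => ?_
      simp only [Complex.mul_re, Complex.mul_im, Complex.conj_re, Complex.conj_im, ha, hb]
      ring
    simp_rw [hterm]
    simp [Finset.sum_add_distrib, Finset.sum_sub_distrib]
  have hskew : (∑ i, ∑ j, (M i j).im * (b i * a j)) = ∑ i, ∑ j, (M i j).im * (a i * b j) := by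
    rw [Finset.sum_comm]
    refine Finset.sum_congr rfl fun i _ => Finset.sum_congr rfl fun j _ => ?_
    rw [hsym j i]
    ring
  have hab : 0 < (∑ i, a i ^ 2) + ∑ i, b i ^ 2 := by
    obtain ⟨k, hk⟩ := Function.ne_iff.mp hv
    have hor : a k ≠ 0 ∨ b k ≠ 0 := by
      by_contra hcon
      push_neg at hcon
      exact hk (Complex.ext (by simpa using hcon.1) (by simpa using hcon.2))
    rcases hor with hne | hne
    · have hap : a ≠ 0 := fun h0 => hne (by rw [h0]; rfl)
      exact add_pos_of_pos_of_nonneg (sumsq_pos hap) (sumsq_nonneg b)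
    · have hbp : b ≠ 0 := fun h0 => hne (by rw [h0]; rfl)
      exact add_pos_of_nonneg_of_pos (sumsq_nonneg a) (sumsq_pos hbp)
  have h1 := hre a
  have h2 := hre b
  rw [hexp, hskew] at hre0
  nlinarith [mul_pos hc hab]

lemma qd_add {α : Type*} [CommRing α] (f g : Fin n → Fin n → α) (v w : Fin n → α) :
    ∑ i, ∑ j, v i * (f i j + g i j) * w j
      = (∑ i, ∑ j, v i * f i j * w j) + ∑ i, ∑ j, v i * g i j * w j := by
  simp_rw [mul_add, add_mul]
  simp [Finset.sum_add_distrib]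

lemma qd_smul {α : Type*} [CommRing α] (c : α) (f : Fin n → Fin n → α) (v w : Fin n → α) :
    ∑ i, ∑ j, v i * (c * f i j) * w j = c * ∑ i, ∑ j, v i * f i j * w j := by
  rw [Finset.mul_sum]
  refine Finset.sum_congr rfl fun i _ => ?_
  rw [Finset.mul_sum]
  exact Finset.sum_congr rfl fun j _ => by ring

lemma qd_diag (d : ℝ) (v : Fin n → ℝ) :
    ∑ i, ∑ j, v i * (d * (if i = j then (1:ℝ) else 0)) * v j = d * ∑ i, v i ^ 2 := by
  rw [Finset.mul_sum]
  refine Finset.sum_congr rfl fun i _ => ?_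
  rw [Finset.sum_eq_single i]
  · simp [pow_two]; ring
  · intro j _ hj
    simp [(Ne.symm hj : ¬ i = j)]
  · intro h; exact absurd (Finset.mem_univ i) h

lemma expo_decomp (P Q : Matrix (Fin n) (Fin n) ℂ) (z : ℂ) (x : Fin n → ℂ) (t : Fin n → ℝ) :
    expo (Matrix.of fun i j => P i j + z * Q i j) x t
      = expo P x t + z * (-(∑ i, ∑ j, (t i : ℂ) * Q i j * (t j : ℂ))) := by
  unfold expo
  have h1 : (∑ i, ∑ j, (t i : ℂ) * (Matrix.of fun i j => P i j + z * Q i j) i j * (t j : ℂ))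
      = (∑ i, ∑ j, (t i : ℂ) * P i j * (t j : ℂ))
        + z * ∑ i, ∑ j, (t i : ℂ) * Q i j * (t j : ℂ) := by
    simp only [Matrix.of_apply]
    rw [qd_add (fun i j => P i j) (fun i j => z * Q i j)]
    congr 1
    exact qd_smul z (fun i j => Q i j) _ _
  rw [h1]
  ring

set_option maxHeartbeats 2000000 in
lemma main_sq (R Im : Matrix (Fin n) (Fin n) ℝ) (hR : R.IsSymm) (hIm : Im.IsSymm)
    (hRpsd : ∀ v : Fin n → ℝ, 0 ≤ ∑ i, ∑ j, v i * R i j * v j)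
    {ε : ℝ} (hε : 0 < ε) (x : Fin n → ℂ) (M : Matrix (Fin n) (Fin n) ℂ)
    (hM : ∀ i j, M i j = ((ε ^ 2 * (if i = j then 1 else 0) + 2 * R i j : ℝ) : ℂ)
        + ((2 * Im i j : ℝ) : ℂ) * Complex.I) :
    ((∫ t : Fin n → ℝ, Complex.exp (expo M x t)) ^ 2 * M.det
        = (Real.pi : ℂ) ^ n * Complex.exp (-∑ i, ∑ j, x i * (M⁻¹ i j) * x j) ^ 2)
      ∧ M.det ≠ 0 := by
  classical
  set Pr : Matrix (Fin n) (Fin n) ℝ :=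
    Matrix.of fun i j => ε ^ 2 * (if i = j then 1 else 0) + 2 * R i j with hPr
  set Qr : Matrix (Fin n) (Fin n) ℝ := Matrix.of fun i j => 2 * Im i j with hQr
  set Pc : Matrix (Fin n) (Fin n) ℂ := Pr.map Complex.ofReal with hPc
  set Qc : Matrix (Fin n) (Fin n) ℂ := Qr.map Complex.ofReal with hQc
  set A : ℂ → Matrix (Fin n) (Fin n) ℂ :=
    fun z => Matrix.of fun i j => Pc i j + z * Qc i j with hA
  have hAapp : ∀ z i j, A z i j = ((Pr i j : ℝ) : ℂ) + z * ((Qr i j : ℝ) : ℂ) := by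
    intro z i j; simp [hA, hPc, hQc, Matrix.map_apply]
  have hAI : A Complex.I = M := by
    ext i j
    rw [hAapp, hM i j, hPr, hQr]
    simp only [Matrix.of_apply]
    ring
  -- symmetry
  have hPrsym : ∀ i j, Pr i j = Pr j i := by
    intro i j
    simp only [hPr, Matrix.of_apply]
    by_cases h : i = j
    · simp [h]
    · rw [if_neg h, if_neg (Ne.symm h), hR.apply i j]
  have hQrsym : ∀ i j, Qr i j = Qr j i := by
    intro i j
    simp only [hQr, Matrix.of_apply, hIm.apply i j]
  have hAsym : ∀ z i j, A z i j = A z j i := by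
    intro z i j; rw [hAapp, hAapp, hPrsym, hQrsym]
  -- constants
  set K : ℝ := ∑ i, ∑ j, |Qr i j| with hK
  have hK0 : 0 ≤ K :=
    Finset.sum_nonneg fun i _ => Finset.sum_nonneg fun j _ => abs_nonneg _
  set δ : ℝ := ε ^ 2 / (2 * (K + 1)) with hδdef
  have hδ : 0 < δ := by positivity
  have hδK : δ * K ≤ ε ^ 2 / 2 := by
    rw [hδdef]
    rw [div_mul_eq_mul_div, div_le_div_iff₀ (by positivity) (by norm_num)]
    nlinarith
  -- quadratic form of Pr
  have hPrqd : ∀ v : Fin n → ℝ, ε ^ 2 * (∑ i, v i ^ 2) ≤ ∑ i, ∑ j, v i * Pr i j * v j := by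
    intro v
    have hsplit : ∑ i, ∑ j, v i * Pr i j * v j
        = (∑ i, ∑ j, v i * (ε ^ 2 * (if i = j then 1 else 0)) * v j)
          + ∑ i, ∑ j, v i * (2 * R i j) * v j := by
      simp only [hPr, Matrix.of_apply]
      exact qd_add _ _ v v
    rw [hsplit, qd_diag]
    have h2 : (0:ℝ) ≤ ∑ i, ∑ j, v i * (2 * R i j) * v j := by
      rw [qd_smul 2 (fun i j => R i j) v v]
      have := hRpsd v
      linarith
    linarith
  -- uniform real-part lower bound on the strip
  have hreA : ∀ z : ℂ, |z.re| < δ → ∀ v : Fin n → ℝ,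
      (ε ^ 2 / 2) * ∑ i, v i ^ 2 ≤ ∑ i, ∑ j, v i * ((A z) i j).re * v j := by
    intro z hz v
    have hAre : ∀ i j, ((A z) i j).re = Pr i j + z.re * Qr i j := by
      intro i j; rw [hAapp]; simp
    have hsplit : ∑ i, ∑ j, v i * ((A z) i j).re * v j
        = (∑ i, ∑ j, v i * Pr i j * v j) + z.re * ∑ i, ∑ j, v i * Qr i j * v j := by
      simp_rw [hAre]
      rw [qd_add (fun i j => Pr i j) (fun i j => z.re * Qr i j) v v]
      congr 1
      exact qd_smul _ _ v v
    rw [hsplit]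
    have h1 := hPrqd v
    have h2 : |z.re * ∑ i, ∑ j, v i * Qr i j * v j| ≤ δ * (K * ∑ i, v i ^ 2) := by
      rw [abs_mul]
      have h3 := qd_abs_le Qr v
      have h4 : |z.re| ≤ δ := hz.le
      have h5 : 0 ≤ |∑ i, ∑ j, v i * Qr i j * v j| := abs_nonneg _
      calc |z.re| * |∑ i, ∑ j, v i * Qr i j * v j| ≤ δ * |∑ i, ∑ j, v i * Qr i j * v j| :=
            mul_le_mul_of_nonneg_right h4 h5
        _ ≤ δ * (K * ∑ i, v i ^ 2) := mul_le_mul_of_nonneg_left h3 hδ.le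
    have h6 : δ * (K * ∑ i, v i ^ 2) ≤ (ε ^ 2 / 2) * ∑ i, v i ^ 2 := by
      rw [← mul_assoc]
      exact mul_le_mul_of_nonneg_right hδK (sumsq_nonneg v)
    have h7 := abs_le.mp h2
    linarith [h7.1, h7.2]
  -- determinant nonvanishing on the strip
  have hdetne : ∀ z : ℂ, |z.re| < δ → (A z).det ≠ 0 := fun z hz =>
    det_ne_zero_complex (A z) (hAsym z) (by positivity : (0:ℝ) < ε ^ 2 / 2) (hreA z hz)
  -- decomposition of the exponent
  set m : (Fin n → ℝ) → ℂ := fun t => -(∑ i, ∑ j, (t i : ℂ) * Qc i j * (t j : ℂ)) with hm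
  have hexpoz : ∀ z (t : Fin n → ℝ), expo (A z) x t = expo Pc x t + z * m t := by
    intro z t
    rw [hA, expo_decomp, hm]
  have hmc : Continuous m := by
    have h : Continuous fun t : Fin n → ℝ => (∑ i, ∑ j, (t i : ℂ) * Qc i j * (t j : ℂ)) := by
      fun_prop
    exact h.neg
  have hmval : ∀ t : Fin n → ℝ, m t = ((-(∑ i, ∑ j, t i * Qr i j * t j) : ℝ) : ℂ) := by
    intro t
    simp only [hm, hQc, Matrix.map_apply]
    push_cast
    ring
  have hmbd : ∀ t : Fin n → ℝ, ‖m t‖ ≤ K * ∑ i, t i ^ 2 := by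
    intro t
    rw [hmval t, Complex.norm_real, Real.norm_eq_abs, abs_neg]
    exact qd_abs_le Qr t
  set cc : ℝ := ε ^ 2 / 2 with hcc
  have hcc0 : 0 < cc := by positivity
  set Cx : ℝ := (2 / cc) * ∑ i, (x i).im ^ 2 with hCx
  have hSexp : ∀ S : ℝ, S * Real.exp (-(cc/4) * S) ≤ 4 / cc := by
    intro S
    have h1 : (cc/4) * S ≤ Real.exp ((cc/4) * S) := by
      have := Real.add_one_le_exp ((cc/4) * S)
      linarith
    have h3 : 0 < Real.exp (-(cc/4) * S) := Real.exp_pos _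
    have h2 : S ≤ (4/cc) * Real.exp ((cc/4) * S) := by
      have h4 : (4/cc) * ((cc/4) * S) ≤ (4/cc) * Real.exp ((cc/4) * S) :=
        mul_le_mul_of_nonneg_left h1 (by positivity)
      have h5 : (4/cc) * ((cc/4) * S) = S := by field_simp
      linarith
    calc S * Real.exp (-(cc/4) * S)
        ≤ ((4/cc) * Real.exp ((cc/4) * S)) * Real.exp (-(cc/4) * S) :=
          mul_le_mul_of_nonneg_right h2 h3.le
      _ = 4/cc := by
          rw [mul_assoc, ← Real.exp_add]
          simp
  set bound : (Fin n → ℝ) → ℝ :=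
    fun t => (K * Real.exp Cx * (4/cc)) * Real.exp (-(cc/4) * ∑ i, t i ^ 2) with hbound
  have hbound_int : Integrable (bound ·) := by
    have h := (gauss_decay_integrable (show (0:ℝ) < cc/4 by positivity) 0 (n := n)).const_mul
      (K * Real.exp Cx * (4/cc))
    refine h.congr (Filter.Eventually.of_forall fun t => ?_)
    simp only [hbound]
    congr 1
    congr 1
    ring
  have hF'bd : ∀ z : ℂ, |z.re| < δ → ∀ t : Fin n → ℝ,
      ‖m t * Complex.exp (expo (A z) x t)‖ ≤ bound t := by
    intro z hz t
    rw [norm_mul]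
    have h1 := norm_exp_expo_le (A z) x hcc0 (hreA z hz) t
    have h2 := hmbd t
    have hS := sumsq_nonneg t
    calc ‖m t‖ * ‖Complex.exp (expo (A z) x t)‖
        ≤ (K * ∑ i, t i ^ 2) * Real.exp ((2/cc) * ∑ i, (x i).im ^ 2 - (cc/2) * ∑ i, t i ^ 2) := by
          exact mul_le_mul h2 h1 (norm_nonneg _) (by positivity)
      _ = K * Real.exp Cx * ((∑ i, t i ^ 2) * Real.exp (-(cc/4) * ∑ i, t i ^ 2))
            * Real.exp (-(cc/4) * ∑ i, t i ^ 2) := by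
          have hE : Real.exp ((2/cc) * ∑ i, (x i).im ^ 2 - (cc/2) * ∑ i, t i ^ 2)
              = Real.exp Cx * Real.exp (-(cc/4) * ∑ i, t i ^ 2)
                * Real.exp (-(cc/4) * ∑ i, t i ^ 2) := by
            rw [← Real.exp_add, ← Real.exp_add, hCx]
            congr 1
            ring
          rw [hE]
          ring
      _ ≤ K * Real.exp Cx * (4/cc) * Real.exp (-(cc/4) * ∑ i, t i ^ 2) := by
          have h6 := hSexp (∑ i, t i ^ 2)
          have h7 : (0:ℝ) ≤ K * Real.exp Cx := by positivity
          have h8 : (0:ℝ) < Real.exp (-(cc/4) * ∑ i, t i ^ 2) := Real.exp_pos _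
          calc K * Real.exp Cx * ((∑ i, t i ^ 2) * Real.exp (-(cc/4) * ∑ i, t i ^ 2))
                * Real.exp (-(cc/4) * ∑ i, t i ^ 2)
              ≤ K * Real.exp Cx * (4/cc) * Real.exp (-(cc/4) * ∑ i, t i ^ 2) := by
                refine mul_le_mul_of_nonneg_right ?_ h8.le
                exact mul_le_mul_of_nonneg_left h6 h7
      _ = bound t := rfl
  -- differentiability of the parametrized integral
  set f : ℂ → ℂ := fun z => ∫ t : Fin n → ℝ, Complex.exp (expo (A z) x t) with hf
  have hfderiv : ∀ z₀ : ℂ, |z₀.re| < δ → DifferentiableAt ℂ f z₀ := by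
    intro z₀ hz₀
    set r : ℝ := δ - |z₀.re| with hr
    have hr0 : 0 < r := by rw [hr]; linarith
    have hball : ∀ z ∈ Metric.ball z₀ r, |z.re| < δ := by
      intro z hz
      have h1 : |z.re - z₀.re| ≤ ‖z - z₀‖ := by
        simpa using Complex.abs_re_le_norm (z - z₀)
      have h2 : ‖z - z₀‖ < r := by rwa [Metric.mem_ball, Complex.dist_eq] at hz
      calc |z.re| = |z₀.re + (z.re - z₀.re)| := by ring_nf
        _ ≤ |z₀.re| + |z.re - z₀.re| := abs_add_le _ _
        _ < |z₀.re| + r := by linarith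
        _ = δ := by rw [hr]; ring
    have hd := hasDerivAt_integral_of_dominated_loc_of_deriv_le (μ := volume)
      (F := fun z (t : Fin n → ℝ) => Complex.exp (expo (A z) x t))
      (F' := fun z (t : Fin n → ℝ) => m t * Complex.exp (expo (A z) x t))
      (x₀ := z₀) (bound := bound) (Metric.ball_mem_nhds z₀ hr0)
      (Filter.Eventually.of_forall fun z =>
        (Complex.continuous_exp.comp (continuous_expo (A z) x)).aestronglyMeasurable)
      (integrable_exp_expo (A z₀) x hcc0 (hreA z₀ hz₀))
      ((hmc.mul (Complex.continuous_exp.comp (continuous_expo (A z₀) x))).aestronglyMeasurable)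
      (Filter.Eventually.of_forall fun t z hz => hF'bd z (hball z hz) t)
      hbound_int
      (Filter.Eventually.of_forall fun t z _hz => by
        have h1 : HasDerivAt (fun w : ℂ => expo Pc x t + w * m t) (m t) z := by
          simpa using ((hasDerivAt_id z).mul_const (m t)).const_add (expo Pc x t)
        have h2 := h1.cexp
        have h3 : (fun w : ℂ => Complex.exp (expo (A w) x t))
            = fun w => Complex.exp (expo Pc x t + w * m t) := by
          funext w; rw [hexpoz]
        rw [h3]
        have h4 : m t * Complex.exp (expo (A z) x t) = Complex.exp (expo Pc x t + z * m t) * m t := by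
          rw [← hexpoz]; ring
        show HasDerivAt _ (m t * Complex.exp (expo (A z) x t)) z
        rw [h4]
        exact h2)
    exact hd.2.differentiableAt
  -- the strip
  set U : Set ℂ := {z : ℂ | |z.re| < δ} with hU
  have hUeq : U = Complex.re ⁻¹' Set.Ioo (-δ) δ := by
    ext z
    simp [hU, abs_lt, Set.mem_Ioo, and_comm]
  have hUopen : IsOpen U := by
    rw [hUeq]; exact isOpen_Ioo.preimage Complex.continuous_re
  have hUconv : Convex ℝ U := by
    rw [hUeq]
    exact (convex_Ioo (-δ) δ).linear_preimage Complex.reLm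
  set lhs : ℂ → ℂ := fun z => (f z) ^ 2 * (A z).det with hlhsd
  set rhs : ℂ → ℂ := fun z => (Real.pi : ℂ) ^ n
    * Complex.exp (-((((A z).det)⁻¹) * ∑ i, ∑ j, x i * ((A z).adjugate i j) * x j)) ^ 2 with hrhsd
  have hent : ∀ i j, Differentiable ℂ fun z => A z i j := by
    intro i j
    have h : (fun z => A z i j) = fun z => Pc i j + z * Qc i j := by
      funext z; rw [hAapp]; simp [hPc, hQc, Matrix.map_apply]
    rw [h]
    exact (differentiable_id.mul_const _).const_add _
  have hdetdiff : Differentiable ℂ fun z => (A z).det := differentiable_det hent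
  have hadjdiff : ∀ i j, Differentiable ℂ fun z => (A z).adjugate i j :=
    differentiable_adjugate hent
  have hflhs : DifferentiableOn ℂ lhs U := by
    intro z hz
    exact (((hfderiv z hz).pow 2).mul (hdetdiff z)).differentiableWithinAt
  have hfrhs : DifferentiableOn ℂ rhs U := by
    intro z hz
    have h1 : DifferentiableAt ℂ (fun w => ((A w).det)⁻¹) z := (hdetdiff z).inv (hdetne z hz)
    have h2 : DifferentiableAt ℂ (fun w => ∑ i, ∑ j, x i * ((A w).adjugate i j) * x j) z := by
      apply DifferentiableAt.fun_sum
      intro i _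
      apply DifferentiableAt.fun_sum
      intro j _
      exact ((hadjdiff i j z).const_mul (x i)).mul_const (x j)
    exact (((((h1.mul h2).neg).cexp).pow 2).const_mul ((Real.pi : ℂ) ^ n)).differentiableWithinAt
  have hAnal_lhs : AnalyticOnNhd ℂ lhs U := hflhs.analyticOnNhd hUopen
  have hAnal_rhs : AnalyticOnNhd ℂ rhs U := hfrhs.analyticOnNhd hUopen
  have hinv_eq : ∀ z : ℂ, |z.re| < δ →
      (-∑ i, ∑ j, x i * ((A z)⁻¹ i j) * x j)
        = -((((A z).det)⁻¹) * ∑ i, ∑ j, x i * ((A z).adjugate i j) * x j) := by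
    intro z hz
    congr 1
    rw [Finset.mul_sum]
    refine Finset.sum_congr rfl fun i _ => ?_
    rw [Finset.mul_sum]
    refine Finset.sum_congr rfl fun j _ => ?_
    have hentry : (A z)⁻¹ i j = ((A z).det)⁻¹ * (A z).adjugate i j := by
      rw [Matrix.inv_def, Matrix.smul_apply, Ring.inverse_eq_inv', smul_eq_mul]
    rw [hentry]
    ring
  have hbase : ∀ r : ℝ, |r| < δ → lhs ↑r = rhs ↑r := by
    intro r hrδ
    have hre_r : |(↑r : ℂ).re| < δ := by simpa using hrδ
    set Hr : Matrix (Fin n) (Fin n) ℝ := Matrix.of fun i j => Pr i j + r * Qr i j with hHr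
    have hAr : A ↑r = Hr.map Complex.ofReal := by
      ext i j
      rw [hAapp]
      simp only [hHr, Matrix.map_apply, Matrix.of_apply]
      push_cast
      ring
    have hHsym : Hr.IsSymm := Matrix.IsSymm.ext fun i j => by
      simp only [hHr, Matrix.of_apply]
      rw [hPrsym j i, hQrsym j i]
    have hHbdd : ∀ v : Fin n → ℝ, cc * ∑ i, v i ^ 2 ≤ ∑ i, ∑ j, v i * Hr i j * v j := by
      intro v
      have h10 := hreA (↑r) hre_r v
      have hent2 : ∀ i j, (A (↑r : ℂ) i j).re = Hr i j := by
        intro i j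
        rw [hAapp]
        simp [hHr]
      simpa only [hent2] using h10
    have hb := base Hr hHsym hcc0 hHbdd x
    have h9 := hinv_eq ↑r hre_r
    rw [hlhsd, hrhsd]
    simp only [hf]
    rw [← h9, hAr]
    exact hb
  have h0U : (0:ℂ) ∈ U := by simp [hU, hδ]
  have hIU : Complex.I ∈ U := by simp [hU, hδ]
  have htendsto : Filter.Tendsto (fun k : ℕ => ((δ / (k + 2) : ℝ) : ℂ)) Filter.atTop
      (nhdsWithin 0 {(0:ℂ)}ᶜ) := by
    apply tendsto_nhdsWithin_of_tendsto_nhds_of_eventually_within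
    · have h2 := (tendsto_const_div_atTop_nhds_zero_nat δ).comp (Filter.tendsto_add_atTop_nat 2)
      have h1 : Filter.Tendsto (fun k : ℕ => δ / ((k : ℝ) + 2)) Filter.atTop (nhds 0) := by
        have h4 : (fun k : ℕ => δ / ((k : ℝ) + 2))
            = (fun n : ℕ => δ / (n : ℝ)) ∘ (fun a : ℕ => a + 2) := by
          funext k
          simp only [Function.comp_apply]
          congr 1
          push_cast
          ring
        rw [h4]
        exact h2
      have h3 := (Complex.continuous_ofReal.tendsto 0).comp h1
      have h5 : ((0:ℝ):ℂ) = 0 := Complex.ofReal_zero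
      rw [← h5]
      exact h3.congr fun k => rfl
    · refine Filter.Eventually.of_forall fun k => ?_
      simp only [Set.mem_compl_iff, Set.mem_singleton_iff]
      intro hzero
      rw [Complex.ofReal_eq_zero] at hzero
      have hk2 : (0:ℝ) < (k : ℝ) + 2 := by positivity
      have hp : (0:ℝ) < δ / ((k : ℝ) + 2) := div_pos hδ hk2
      rw [hzero] at hp
      exact lt_irrefl 0 hp
  have hfreq : ∃ᶠ z in nhdsWithin 0 {(0:ℂ)}ᶜ, lhs z = rhs z := by
    refine htendsto.frequently (Filter.Frequently.of_forall fun k => ?_)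
    apply hbase
    have hk2 : (0:ℝ) < (k : ℝ) + 2 := by positivity
    rw [abs_of_pos (div_pos hδ hk2)]
    refine div_lt_self hδ ?_
    have := Nat.cast_nonneg (α := ℝ) k
    linarith
  have hEq : Set.EqOn lhs rhs U :=
    hAnal_lhs.eqOn_of_preconnected_of_frequently_eq hAnal_rhs hUconv.isPreconnected h0U hfreq
  have hfinal := hEq hIU
  rw [hlhsd, hrhsd] at hfinal
  simp only [hf] at hfinal
  have h9 := hinv_eq Complex.I (by simp [hδ])
  rw [← h9, hAI] at hfinal
  refine ⟨hfinal, ?_⟩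
  rw [← hAI]
  exact hdetne Complex.I (by simp [hδ])

end CGaussAux

namespace CGaussAux
variable {n : ℕ}

lemma qd_diagC (d : ℂ) (v : Fin n → ℂ) :
    ∑ i, ∑ j, v i * (d * (if i = j then (1:ℂ) else 0)) * v j = d * ∑ i, v i ^ 2 := by
  rw [Finset.mul_sum]
  refine Finset.sum_congr rfl fun i _ => ?_
  rw [Finset.sum_eq_single i]
  · simp [pow_two]; ring
  · intro j _ hj
    simp [(Ne.symm hj : ¬ i = j)]
  · intro h; exact absurd (Finset.mem_univ i) h

lemma sqrt_pow_eq {a : ℝ} (ha : 0 ≤ a) (k : ℕ) : Real.sqrt a ^ k = Real.sqrt (a ^ k) := by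
  have h : (Real.sqrt a ^ k) ^ 2 = a ^ k := by
    rw [← pow_mul, mul_comm, pow_mul, Real.sq_sqrt ha]
  rw [← h, Real.sqrt_sq (pow_nonneg (Real.sqrt_nonneg a) k)]

lemma cpow_half_eq_sqrt {a : ℝ} (ha : 0 ≤ a) :
    (a : ℂ) ^ ((1:ℂ)/2) = (Real.sqrt a : ℂ) := by
  rw [show ((1:ℂ)/2) = ((1/2 : ℝ) : ℂ) by norm_num, ← Complex.ofReal_cpow ha,
    ← Real.sqrt_eq_rpow]

end CGaussAux


open CGaussAux in
set_option maxHeartbeats 1000000 in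
/-- multivariate complex Gaussian integral
`∫ exp(2i t·x − tᵀ(ε²Id+2W)t) dt = √(πⁿ/det(ε²Id+2W)) exp(−xᵀ(ε²Id+2W)⁻¹x)`,
where the square root of the determinant is the branch continuous in `W`
from `W = 0` (encoded by a continuous path of square roots along `s ↦ ε²Id + 2sW`). -/
theorem complex_gaussian_integral_shifted
    {n : ℕ} (R Im : Matrix (Fin n) (Fin n) ℝ)
    (hR : R.IsSymm) (hIm : Im.IsSymm) (hRpsd : R.PosSemidef)
    (W : Matrix (Fin n) (Fin n) ℂ)
    (hW : W = R.map Complex.ofReal + Complex.I • Im.map Complex.ofReal)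
    (ε : ℝ) (hε : 0 < ε) (x : Fin n → ℂ) :
    ∃ d : ℂ,
      d ^ 2 = (Real.pi : ℂ) ^ n
          / (((ε : ℂ) ^ 2) • (1 : Matrix (Fin n) (Fin n) ℂ) + 2 • W).det ∧
      (∃ g : ℝ → ℂ, ContinuousOn g (Set.Icc 0 1) ∧
        (∀ s ∈ Set.Icc (0 : ℝ) 1,
          g s ^ 2 = (Real.pi : ℂ) ^ n
            / (((ε : ℂ) ^ 2) • (1 : Matrix (Fin n) (Fin n) ℂ) + ((2 * s : ℝ) : ℂ) • W).det) ∧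
        g 0 = (Real.sqrt (Real.pi ^ n / (ε ^ 2) ^ n) : ℂ) ∧ g 1 = d) ∧
      (∫ t : Fin n → ℝ,
          Complex.exp (2 * Complex.I * ∑ i, (t i : ℂ) * x i
            - ∑ i, ∑ j, (t i : ℂ)
                * ((((ε : ℂ) ^ 2) • (1 : Matrix (Fin n) (Fin n) ℂ) + 2 • W) i j)
                * (t j : ℂ)))
        = d * Complex.exp (- ∑ i, ∑ j,
            x i * (((((ε : ℂ) ^ 2) • (1 : Matrix (Fin n) (Fin n) ℂ) + 2 • W)⁻¹) i j) * x j) := by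
  classical
  set Ms : ℝ → Matrix (Fin n) (Fin n) ℂ :=
    fun s => ((ε : ℂ) ^ 2) • (1 : Matrix (Fin n) (Fin n) ℂ) + ((2 * s : ℝ) : ℂ) • W with hMs
  have hM1 : ((ε : ℂ) ^ 2) • (1 : Matrix (Fin n) (Fin n) ℂ) + 2 • W = Ms 1 := by
    rw [hMs]
    ext i j
    simp only [Matrix.add_apply, Matrix.smul_apply, smul_eq_mul]
    norm_num [nsmul_eq_mul]
  have hRpsd' : ∀ v : Fin n → ℝ, 0 ≤ ∑ i, ∑ j, v i * R i j * v j := by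
    intro v
    have h := hRpsd.dotProduct_mulVec_nonneg v
    rwa [star_trivial, dot_eq_qd_real] at h
  have hWentry : ∀ i j, W i j = ((R i j : ℝ) : ℂ) + ((Im i j : ℝ) : ℂ) * Complex.I := by
    intro i j
    rw [hW]
    simp only [Matrix.add_apply, Matrix.smul_apply, Matrix.map_apply, smul_eq_mul]
    ring
  have key : ∀ s : ℝ, 0 ≤ s →
      ((∫ t : Fin n → ℝ, Complex.exp (expo (Ms s) x t)) ^ 2 * (Ms s).det
          = (Real.pi : ℂ) ^ n
            * Complex.exp (-∑ i, ∑ j, x i * ((Ms s)⁻¹ i j) * x j) ^ 2)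
        ∧ (Ms s).det ≠ 0 := by
    intro s hs
    refine main_sq (s • R) (s • Im) ?_ ?_ ?_ hε x (Ms s) ?_
    · exact Matrix.IsSymm.ext fun i j => by
        simp only [Matrix.smul_apply, smul_eq_mul]
        rw [hR.apply i j]
    · exact Matrix.IsSymm.ext fun i j => by
        simp only [Matrix.smul_apply, smul_eq_mul]
        rw [hIm.apply i j]
    · intro v
      have h1 : ∑ i, ∑ j, v i * (s • R) i j * v j = s * ∑ i, ∑ j, v i * R i j * v j := by
        simp only [Matrix.smul_apply, smul_eq_mul]
        exact qd_smul s (fun i j => R i j) v v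
      rw [h1]
      exact mul_nonneg hs (hRpsd' v)
    · intro i j
      simp only [hMs, Matrix.add_apply, Matrix.smul_apply, Matrix.one_apply, smul_eq_mul,
        hWentry i j]
      push_cast
      by_cases h : i = j <;> simp [h] <;> ring
  set F : ℝ → ℂ := fun s => ∫ t : Fin n → ℝ, Complex.exp (expo (Ms s) x t) with hF
  set E : ℝ → ℂ := fun s => ∑ i, ∑ j, x i * ((Ms s)⁻¹ i j) * x j with hE
  set g : ℝ → ℂ := fun s => F s * Complex.exp (E s) with hg
  set d : ℂ := g 1 with hd
  have hexpE : ∀ s : ℝ, Complex.exp (-E s) * Complex.exp (E s) = 1 := fun s => by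
    rw [← Complex.exp_add]
    simp
  have hsq : ∀ s : ℝ, 0 ≤ s → g s ^ 2 = (Real.pi : ℂ) ^ n / (Ms s).det := by
    intro s hs
    obtain ⟨h1, h2⟩ := key s hs
    rw [eq_div_iff h2]
    calc g s ^ 2 * (Ms s).det
        = ((∫ t : Fin n → ℝ, Complex.exp (expo (Ms s) x t)) ^ 2 * (Ms s).det)
          * Complex.exp (E s) ^ 2 := by rw [hg]; ring
      _ = (Real.pi : ℂ) ^ n * (Complex.exp (-E s) * Complex.exp (E s)) ^ 2 := by
          rw [h1, hE]; ring
      _ = (Real.pi : ℂ) ^ n := by rw [hexpE s]; simp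
  have hI1 : F 1 = d * Complex.exp (-E 1) := by
    have h5 : d * Complex.exp (-E 1) = F 1 * (Complex.exp (-E 1) * Complex.exp (E 1)) := by
      rw [hd, hg]; ring
    rw [h5, hexpE 1, mul_one]
  -- value at 0
  have hMs0 : Ms 0 = ((ε : ℂ) ^ 2) • (1 : Matrix (Fin n) (Fin n) ℂ) := by
    rw [hMs]
    norm_num
  have hre2 : (0:ℝ) < ((ε : ℂ) ^ 2).re := by
    have h : ((ε:ℂ)^2) = ((ε^2 : ℝ) : ℂ) := by push_cast; ring
    rw [h, Complex.ofReal_re]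
    positivity
  have hεC2 : ((ε:ℂ)^2) ≠ 0 := by
    intro h
    rw [show ((ε:ℂ)^2) = ((ε^2 : ℝ) : ℂ) by push_cast; ring, Complex.ofReal_eq_zero] at h
    exact (by positivity : (0:ℝ) < ε ^ 2).ne' h
  have hsmul_entry : ∀ (a : ℂ) i j, ((a • (1 : Matrix (Fin n) (Fin n) ℂ)) i j)
      = a * (if i = j then 1 else 0) := by
    intro a i j
    simp [Matrix.smul_apply, Matrix.one_apply]
  have hexpo0 : ∀ t : Fin n → ℝ, expo (Ms 0) x t
      = -∑ i, ((ε:ℂ)^2) * (t i : ℂ) ^ 2 + ∑ i, (2 * Complex.I * x i) * (t i : ℂ) := by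
    intro t
    rw [hMs0]
    unfold expo
    have hq : ∑ i, ∑ j, (t i : ℂ) * ((((ε:ℂ)^2) • (1 : Matrix (Fin n) (Fin n) ℂ)) i j) * (t j : ℂ)
        = ((ε:ℂ)^2) * ∑ i, (t i : ℂ) ^ 2 := by
      simp_rw [hsmul_entry]
      exact qd_diagC _ _
    rw [hq]
    have hl : 2 * Complex.I * ∑ i, (t i : ℂ) * x i = ∑ i, (2 * Complex.I * x i) * (t i : ℂ) := by
      rw [Finset.mul_sum]
      exact Finset.sum_congr rfl fun i _ => by ring
    rw [hl, Finset.mul_sum]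
    ring
  have hint0 := GaussianFourier.integral_cexp_neg_sum_mul_add (ι := Fin n)
    (b := fun _ => (ε:ℂ)^2) (fun _ => hre2) (fun i => 2 * Complex.I * x i)
  have hF0 : F 0 = (((Real.pi : ℂ) / ((ε:ℂ)^2)) ^ ((1:ℂ)/2)) ^ n
      * Complex.exp (-∑ i, x i ^ 2 / ((ε:ℂ)^2)) := by
    rw [hF]
    simp only []
    rw [integral_congr_ae (Filter.Eventually.of_forall fun t => by rw [hexpo0 t]), hint0]
    rw [Finset.prod_mul_distrib, Finset.prod_const, Finset.card_univ, Fintype.card_fin,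
      ← Complex.exp_sum]
    congr 2
    rw [← Finset.sum_neg_distrib]
    refine Finset.sum_congr rfl fun i _ => ?_
    have h6 : (2 * Complex.I * x i) ^ 2 = -4 * x i ^ 2 := by
      rw [mul_pow, mul_pow, Complex.I_sq]; ring
    rw [h6]
    field_simp
  have hinv0 : (Ms 0)⁻¹ = (((ε:ℂ)^2)⁻¹) • (1 : Matrix (Fin n) (Fin n) ℂ) := by
    rw [hMs0]
    apply Matrix.inv_eq_right_inv
    rw [Matrix.smul_mul, Matrix.mul_smul, Matrix.one_mul, smul_smul,
      mul_inv_cancel₀ hεC2, one_smul]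
  have hE0 : E 0 = ∑ i, x i ^ 2 / ((ε:ℂ)^2) := by
    rw [hE]
    simp only [hinv0]
    simp_rw [hsmul_entry]
    rw [qd_diagC]
    rw [Finset.mul_sum]
    exact Finset.sum_congr rfl fun i _ => by ring
  have hg0 : g 0 = (Real.sqrt (Real.pi ^ n / (ε ^ 2) ^ n) : ℂ) := by
    rw [hg]
    simp only []
    rw [hF0, hE0, mul_assoc]
    have h7 : Complex.exp (-∑ i, x i ^ 2 / ((ε:ℂ)^2)) * Complex.exp (∑ i, x i ^ 2 / ((ε:ℂ)^2))
        = 1 := by rw [← Complex.exp_add]; simp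
    rw [h7, mul_one]
    have hdiv : ((Real.pi : ℂ) / ((ε:ℂ)^2)) = ((Real.pi / ε^2 : ℝ) : ℂ) := by push_cast; ring
    rw [hdiv, cpow_half_eq_sqrt (by positivity)]
    norm_cast
    rw [sqrt_pow_eq (by positivity), div_pow]
  -- continuity
  have hent : ∀ i j, Continuous fun s : ℝ => Ms s i j := by
    intro i j
    have h : (fun s : ℝ => Ms s i j)
        = fun s : ℝ => ((ε:ℂ)^2) * (1 : Matrix (Fin n) (Fin n) ℂ) i j + ((2*s : ℝ) : ℂ) * W i j := by
      funext s
      simp [hMs, Matrix.add_apply, Matrix.smul_apply, smul_eq_mul]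
    rw [h]
    apply continuous_const.add
    exact (Complex.continuous_ofReal.comp (by fun_prop)).mul continuous_const
  have hMmat : Continuous fun s : ℝ => Ms s := continuous_matrix hent
  have hdetc : Continuous fun s => (Ms s).det := hMmat.matrix_det
  have hadjc : ∀ i j, Continuous fun s => (Ms s).adjugate i j := by
    intro i j
    exact (continuous_apply j).comp ((continuous_apply i).comp hMmat.matrix_adjugate)
  have hEc : ContinuousOn E (Set.Icc 0 1) := by
    have hEeq : E = fun s => ((Ms s).det)⁻¹ * ∑ i, ∑ j, x i * ((Ms s).adjugate i j) * x j := by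
      funext s
      rw [hE]
      simp only []
      rw [Finset.mul_sum]
      refine Finset.sum_congr rfl fun i _ => ?_
      rw [Finset.mul_sum]
      refine Finset.sum_congr rfl fun j _ => ?_
      have hentry : (Ms s)⁻¹ i j = ((Ms s).det)⁻¹ * (Ms s).adjugate i j := by
        rw [Matrix.inv_def, Matrix.smul_apply, Ring.inverse_eq_inv', smul_eq_mul]
      rw [hentry]
      ring
    rw [hEeq]
    apply ContinuousOn.mul
    · exact ContinuousOn.inv₀ hdetc.continuousOn fun s hs => (key s hs.1).2
    · exact (continuous_finset_sum _ fun i _ => continuous_finset_sum _ fun j _ =>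
        (continuous_const.mul (hadjc i j)).mul continuous_const).continuousOn
  have hFc : ContinuousOn F (Set.Icc 0 1) := by
    rw [hF]
    apply MeasureTheory.continuousOn_of_dominated
      (bound := fun t : Fin n → ℝ =>
        Real.exp ((2/(ε^2)) * ∑ i, (x i).im ^ 2 - (ε^2/2) * ∑ i, t i ^ 2))
    · intro s _
      exact (Complex.continuous_exp.comp (continuous_expo _ x)).aestronglyMeasurable
    · intro s hs
      refine Filter.Eventually.of_forall fun t => ?_
      refine norm_exp_expo_le (Ms s) x (by positivity) ?_ t
      intro v
      have hMre : ∀ i j, ((Ms s) i j).re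
          = ε^2 * (if i = j then 1 else 0) + 2 * s * R i j := by
        intro i j
        have hM' : (Ms s) i j = ((ε^2 * (if i = j then 1 else 0) + 2*s*R i j : ℝ) : ℂ)
            + ((2*s*Im i j : ℝ) : ℂ) * Complex.I := by
          rw [hMs]
          simp only [Matrix.add_apply, Matrix.smul_apply, Matrix.one_apply, smul_eq_mul,
            hWentry i j]
          push_cast
          by_cases h : i = j <;> simp [h] <;> ring
        rw [hM']
        simp
      simp_rw [hMre]
      rw [qd_add (fun i j => ε^2 * (if i = j then 1 else 0)) (fun i j => 2 * s * R i j) v v,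
        qd_diag]
      have h8 : 0 ≤ ∑ i, ∑ j, v i * (2 * s * R i j) * v j := by
        rw [qd_smul (2*s) (fun i j => R i j) v v]
        exact mul_nonneg (by linarith [hs.1]) (hRpsd' v)
      linarith
    · exact gauss_decay_integrable (by positivity) _
    · refine Filter.Eventually.of_forall fun t => ?_
      have hc : Continuous fun s : ℝ => expo (Ms s) x t := by
        unfold expo
        apply Continuous.sub continuous_const
        exact continuous_finset_sum _ fun i _ => continuous_finset_sum _ fun j _ =>
          (continuous_const.mul (hent i j)).mul continuous_const
      exact (Complex.continuous_exp.comp hc).continuousOn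
  have hgc : ContinuousOn g (Set.Icc 0 1) :=
    hFc.mul (Complex.continuous_exp.comp_continuousOn hEc)
  refine ⟨d, ?_, ⟨g, hgc, ?_, hg0, rfl⟩, ?_⟩
  · rw [hM1]
    exact hsq 1 zero_le_one
  · intro s hs
    exact hsq s hs.1
  · rw [hM1]
    have h10 := hI1
    rw [hF, hE] at h10
    simp only [] at h10
    unfold expo at h10
    exact h10
end

section
/- Fix ε > 0 and complex numbers w with Re(w) ≥ 0 (the Feynman propagator value w_{↑↑}(A,A)), and write r = Re(w). Then the triple Gaussian integral (√(2/π³))·ε·∫_ℝ dq ∫_ℝ dt ∫_ℝ dt' exp(−ε²(t²+t'²) − 2iq(t−t') − 2ist) · exp(2i(t−t')·c) · exp(4tt'r − 2t²w − 2t'²w̄) equals exp(−s²/(2ε²)) for all real s and c. -/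
open MeasureTheory Complex

lemma mul_cpow_half {x y : ℂ} (hx : 0 < x.re) (hy : 0 < y.re) :
    (x * y) ^ (1/2 : ℂ) = x ^ (1/2 : ℂ) * y ^ (1/2 : ℂ) := by
  have hx0 : x ≠ 0 := fun h => by simp [h] at hx
  have hy0 : y ≠ 0 := fun h => by simp [h] at hy
  have hax : |x.arg| < Real.pi/2 := Complex.abs_arg_lt_pi_div_two_iff.mpr (Or.inl hx)
  have hay : |y.arg| < Real.pi/2 := Complex.abs_arg_lt_pi_div_two_iff.mpr (Or.inl hy)
  have harg : x.arg + y.arg ∈ Set.Ioc (-Real.pi) Real.pi := by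
    constructor
    · cases abs_lt.mp hax; cases abs_lt.mp hay; linarith [Real.pi_pos]
    · cases abs_lt.mp hax; cases abs_lt.mp hay; linarith [Real.pi_pos]
  rw [Complex.cpow_def_of_ne_zero (mul_ne_zero hx0 hy0), Complex.cpow_def_of_ne_zero hx0,
    Complex.cpow_def_of_ne_zero hy0, Complex.log_mul hx0 hy0 harg, add_mul, Complex.exp_add]

set_option maxHeartbeats 2000000 in
/-- the triple Gaussian (discard) integral
`√(2/π³) ε ∫dq ∫dt ∫dt' exp(−ε²(t²+t'²) − 2iq(t−t') − 2ist)
   exp(2i(t−t')c) exp(4tt'r − 2t²w − 2t'²w̄) = exp(−s²/(2ε²))`,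
with `r = Re w ≥ 0`, for all real `s`, `c`. -/
theorem discard_triple_gaussian_integral
    (ε s c : ℝ) (hε : 0 < ε) (w : ℂ) (hw : 0 ≤ w.re) :
    ((Real.sqrt (2 / Real.pi ^ 3) : ℝ) : ℂ) * (ε : ℂ) *
        ∫ q : ℝ, ∫ t : ℝ, ∫ t' : ℝ,
          Complex.exp (-(ε : ℂ) ^ 2 * ((t : ℂ) ^ 2 + (t' : ℂ) ^ 2)
              - 2 * Complex.I * (q : ℂ) * ((t : ℂ) - (t' : ℂ))
              - 2 * Complex.I * (s : ℂ) * (t : ℂ)) *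
          Complex.exp (2 * Complex.I * ((t : ℂ) - (t' : ℂ)) * (c : ℂ)) *
          Complex.exp (4 * (t : ℂ) * (t' : ℂ) * (w.re : ℂ)
              - 2 * (t : ℂ) ^ 2 * w - 2 * (t' : ℂ) ^ 2 * (starRingEnd ℂ w))
      = Complex.exp (-((s ^ 2 / (2 * ε ^ 2) : ℝ) : ℂ)) := by
  set V : ℂ := starRingEnd ℂ w with hV
  set m : ℝ := -(ε^4 + 4*ε^2*w.re + 4*w.im^2) with hmdef
  have hεC : (ε:ℂ) ≠ 0 := ofReal_ne_zero.mpr hε.ne'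
  have hm : m < 0 := by nlinarith [sq_nonneg (w.im), pow_pos hε 4, mul_pos (pow_pos hε 2) hε]
  have hmC : (m:ℂ) ≠ 0 := ofReal_ne_zero.mpr hm.ne
  -- D = ε² + 2 conj w
  have hDre : ((ε:ℂ)^2 + 2*V).re = ε^2 + 2*w.re := by
    simp [hV, Complex.add_re, Complex.mul_re, ← Complex.ofReal_pow]
  have hDrepos : 0 < ((ε:ℂ)^2 + 2*V).re := by
    rw [hDre]; positivity
  have hD0 : ((ε:ℂ)^2 + 2*V) ≠ 0 := fun h => by simp [h] at hDrepos
  -- identities for the algebra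
  have hRe : ((w.re:ℝ):ℂ) = (w + V)/2 := by rw [hV, Complex.add_conj]; push_cast; ring
  have hmC' : ((m:ℝ):ℂ) = -((ε:ℂ)^2)^2 - 2*(ε:ℂ)^2*(w+V) + (w-V)^2 := by
    rw [hV, Complex.add_conj, Complex.sub_conj, hmdef]
    push_cast
    linear_combination (-4*(w.im:ℂ)^2) * Complex.I_sq
  -- Step 1 : innermost integral over t'
  have hb1 : (-((ε:ℂ)^2 + 2*V)).re < 0 := by rwa [Complex.neg_re, neg_lt_zero]
  have h1 : ∀ q t : ℝ,
      (∫ t' : ℝ,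
          Complex.exp (-(ε : ℂ) ^ 2 * ((t : ℂ) ^ 2 + (t' : ℂ) ^ 2)
              - 2 * Complex.I * (q : ℂ) * ((t : ℂ) - (t' : ℂ))
              - 2 * Complex.I * (s : ℂ) * (t : ℂ)) *
          Complex.exp (2 * Complex.I * ((t : ℂ) - (t' : ℂ)) * (c : ℂ)) *
          Complex.exp (4 * (t : ℂ) * (t' : ℂ) * (w.re : ℂ)
              - 2 * (t : ℂ) ^ 2 * w - 2 * (t' : ℂ) ^ 2 * V))
        = ((Real.pi:ℂ) / ((ε:ℂ)^2 + 2*V)) ^ (1/2 : ℂ) *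
          Complex.exp ((-(ε:ℂ)^2*t^2 - 2*I*q*t - 2*I*s*t + 2*I*t*c - 2*t^2*w)
            - (2*I*q - 2*I*c + 4*t*(w.re:ℂ))^2 / (4 * (-((ε:ℂ)^2 + 2*V)))) := by
    intro q t
    have hfun : ∀ t' : ℝ,
        Complex.exp (-(ε : ℂ) ^ 2 * ((t : ℂ) ^ 2 + (t' : ℂ) ^ 2)
              - 2 * Complex.I * (q : ℂ) * ((t : ℂ) - (t' : ℂ))
              - 2 * Complex.I * (s : ℂ) * (t : ℂ)) *
          Complex.exp (2 * Complex.I * ((t : ℂ) - (t' : ℂ)) * (c : ℂ)) *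
          Complex.exp (4 * (t : ℂ) * (t' : ℂ) * (w.re : ℂ)
              - 2 * (t : ℂ) ^ 2 * w - 2 * (t' : ℂ) ^ 2 * V)
        = Complex.exp ((-((ε:ℂ)^2 + 2*V)) * (t':ℂ)^2 + (2*I*q - 2*I*c + 4*t*(w.re:ℂ)) * t'
            + (-(ε:ℂ)^2*t^2 - 2*I*q*t - 2*I*s*t + 2*I*t*c - 2*t^2*w)) := by
      intro t'
      rw [← Complex.exp_add, ← Complex.exp_add]
      congr 1
      ring
    simp only [hfun]
    rw [integral_cexp_quadratic hb1, neg_neg]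
  -- Step 2 : integral over t
  have hb2 : (((m:ℝ):ℂ)/((ε:ℂ)^2 + 2*V)).re < 0 := by
    rw [Complex.div_re]
    simp only [Complex.ofReal_re, Complex.ofReal_im, zero_mul, zero_div, add_zero]
    apply div_neg_of_neg_of_pos
    · exact mul_neg_of_neg_of_pos hm hDrepos
    · exact Complex.normSq_pos.mpr hD0
  have h2 : ∀ q : ℝ,
      (∫ t : ℝ, Complex.exp ((-(ε:ℂ)^2*t^2 - 2*I*q*t - 2*I*s*t + 2*I*t*c - 2*t^2*w)
            - (2*I*q - 2*I*c + 4*t*(w.re:ℂ))^2 / (4 * (-((ε:ℂ)^2 + 2*V)))))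
        = ((Real.pi:ℂ) / -(((m:ℝ):ℂ)/((ε:ℂ)^2 + 2*V))) ^ (1/2 : ℂ) *
          Complex.exp ((-((q:ℂ)-c)^2/((ε:ℂ)^2 + 2*V))
            - (-2*I*((q:ℂ)+s-c) + 4*I*(w.re:ℂ)*((q:ℂ)-c)/((ε:ℂ)^2 + 2*V))^2
              / (4 * (((m:ℝ):ℂ)/((ε:ℂ)^2 + 2*V)))) := by
    intro q
    have hfun2 : ∀ t : ℝ,
        Complex.exp ((-(ε:ℂ)^2*t^2 - 2*I*q*t - 2*I*s*t + 2*I*t*c - 2*t^2*w)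
            - (2*I*q - 2*I*c + 4*t*(w.re:ℂ))^2 / (4 * (-((ε:ℂ)^2 + 2*V))))
        = Complex.exp ((((m:ℝ):ℂ)/((ε:ℂ)^2 + 2*V)) * (t:ℂ)^2
            + (-2*I*((q:ℂ)+s-c) + 4*I*(w.re:ℂ)*((q:ℂ)-c)/((ε:ℂ)^2 + 2*V)) * t
            + (-((q:ℂ)-c)^2/((ε:ℂ)^2 + 2*V))) := by
      intro t
      congr 1
      rw [hRe, hmC']
      have hnD : -((ε:ℂ)^2+2*V) ≠ 0 := neg_ne_zero.mpr hD0
      have hX : (-((ε:ℂ)^2*16) - V*32) ≠ 0 := by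
        have h16 : (-((ε:ℂ)^2*16) - V*32) = -16*((ε:ℂ)^2+2*V) := by ring
        rw [h16]; exact mul_ne_zero (by norm_num) hD0
      rw [show (4:ℂ) * -((ε:ℂ)^2+2*V) = -(4*((ε:ℂ)^2+2*V)) by ring, div_neg, sub_neg_eq_add]
      field_simp [hD0]
      ring_nf
      simp only [Complex.I_sq]
      ring
    simp only [hfun2]
    rw [integral_cexp_quadratic hb2]
  -- Step 3 : integral over q
  have hb3eq : 2*(ε:ℂ)^2/((m:ℝ):ℂ) = (((2*ε^2/m : ℝ)):ℂ) := by push_cast; ring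
  have hb3 : (2*(ε:ℂ)^2/((m:ℝ):ℂ)).re < 0 := by
    rw [hb3eq, Complex.ofReal_re]
    exact div_neg_of_pos_of_neg (by positivity) hm
  have hM0 : (-((ε:ℂ)^2)^2 - 2*(ε:ℂ)^2*(w+V) + (w-V)^2) ≠ 0 := hmC' ▸ hmC
  have h3 : (∫ q : ℝ, Complex.exp ((-((q:ℂ)-c)^2/((ε:ℂ)^2 + 2*V))
            - (-2*I*((q:ℂ)+s-c) + 4*I*(w.re:ℂ)*((q:ℂ)-c)/((ε:ℂ)^2 + 2*V))^2
              / (4 * (((m:ℝ):ℂ)/((ε:ℂ)^2 + 2*V)))))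
      = ((Real.pi:ℂ) / -(2*(ε:ℂ)^2/((m:ℝ):ℂ))) ^ (1/2 : ℂ) *
        Complex.exp (((2*(ε:ℂ)^2*(c:ℂ)^2 - 2*(s:ℂ)*((ε:ℂ)^2 - w + V)*(c:ℂ)
              + (s:ℂ)^2*((ε:ℂ)^2+2*V))/((m:ℝ):ℂ))
          - ((2*(s:ℂ)*((ε:ℂ)^2 - w + V) - 4*(ε:ℂ)^2*(c:ℂ))/((m:ℝ):ℂ))^2
              / (4 * (2*(ε:ℂ)^2/((m:ℝ):ℂ)))) := by
    have hfun3 : ∀ q : ℝ,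
        Complex.exp ((-((q:ℂ)-c)^2/((ε:ℂ)^2 + 2*V))
            - (-2*I*((q:ℂ)+s-c) + 4*I*(w.re:ℂ)*((q:ℂ)-c)/((ε:ℂ)^2 + 2*V))^2
              / (4 * (((m:ℝ):ℂ)/((ε:ℂ)^2 + 2*V))))
        = Complex.exp ((2*(ε:ℂ)^2/((m:ℝ):ℂ)) * (q:ℂ)^2
            + ((2*(s:ℂ)*((ε:ℂ)^2 - w + V) - 4*(ε:ℂ)^2*(c:ℂ))/((m:ℝ):ℂ)) * q
            + ((2*(ε:ℂ)^2*(c:ℂ)^2 - 2*(s:ℂ)*((ε:ℂ)^2 - w + V)*(c:ℂ)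
              + (s:ℂ)^2*((ε:ℂ)^2+2*V))/((m:ℝ):ℂ))) := by
      intro q
      congr 1
      rw [hRe, hmC']
      field_simp [hD0, hM0]
      have hN : ((ε:ℂ) ^ 2 * (-(ε:ℂ) ^ 2 - 2 * (w + V)) + (w - V) ^ 2) ≠ 0 := by
        intro h; apply hM0; linear_combination h
      rw [eq_div_iff hN, sub_mul, div_mul_cancel₀ _ hN]
      ring_nf
      simp only [Complex.I_sq]
      ring
    simp only [hfun3]
    rw [integral_cexp_quadratic hb3]
  -- assemble
  simp only [h1, integral_const_mul, h2, h3]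
  -- final exponent
  have hexp : (((2*(ε:ℂ)^2*(c:ℂ)^2 - 2*(s:ℂ)*((ε:ℂ)^2 - w + V)*(c:ℂ)
              + (s:ℂ)^2*((ε:ℂ)^2+2*V))/((m:ℝ):ℂ))
          - ((2*(s:ℂ)*((ε:ℂ)^2 - w + V) - 4*(ε:ℂ)^2*(c:ℂ))/((m:ℝ):ℂ))^2
              / (4 * (2*(ε:ℂ)^2/((m:ℝ):ℂ))))
      = -((s ^ 2 / (2 * ε ^ 2) : ℝ) : ℂ) := by
    rw [hmC']
    rw [show (4:ℂ) * (2*(ε:ℂ)^2/(-((ε:ℂ)^2)^2 - 2*(ε:ℂ)^2*(w+V) + (w-V)^2))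
        = (8*(ε:ℂ)^2)/(-((ε:ℂ)^2)^2 - 2*(ε:ℂ)^2*(w+V) + (w-V)^2) by ring,
      div_div_eq_mul_div]
    push_cast
    field_simp [hM0, hεC]
    rw [div_eq_iff (by intro h; apply hM0; linear_combination h)]
    ring
  rw [hexp]
  -- prefactor
  have hpi := Real.pi_pos
  have hcast : ∀ x:ℝ, 0 ≤ x → ((x:ℝ):ℂ)^(1/2:ℂ) = ((Real.sqrt x : ℝ) : ℂ) := by
    intro x hx
    rw [show (1/2:ℂ) = ((1/2:ℝ):ℂ) by norm_num, ← Complex.ofReal_cpow hx,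
      ← Real.sqrt_eq_rpow]
  have e2 : (Real.pi:ℂ) / -(((m:ℝ):ℂ) / ((ε:ℂ)^2+2*V)) = (Real.pi:ℂ) * ((ε:ℂ)^2+2*V) / (((-m:ℝ)):ℂ) := by
    rw [← neg_div, div_div_eq_mul_div]
    push_cast
    ring
  have e3 : (Real.pi:ℂ) / -(2*(ε:ℂ)^2/((m:ℝ):ℂ)) = (((Real.pi * (-m) / (2*ε^2) : ℝ)):ℂ) := by
    rw [div_neg, div_div_eq_mul_div]
    push_cast
    ring
  have hA : 0 < ((Real.pi:ℂ) / ((ε:ℂ)^2 + 2*V)).re := by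
    rw [Complex.div_re]
    have h1' : 0 < Complex.normSq ((ε:ℂ)^2 + 2*V) := Complex.normSq_pos.mpr hD0
    have h2' : ((Real.pi:ℂ)).im = 0 := Complex.ofReal_im _
    have h3' : ((Real.pi:ℂ)).re = Real.pi := Complex.ofReal_re _
    rw [h2', h3']
    simp only [zero_mul, zero_div, add_zero]
    positivity
  have hB : 0 < ((Real.pi:ℂ) * ((ε:ℂ)^2+2*V) / (((-m:ℝ)):ℂ)).re := by
    rw [Complex.div_ofReal_re]
    have : ((Real.pi:ℂ) * ((ε:ℂ)^2+2*V)).re = Real.pi * ((ε:ℂ)^2+2*V).re := by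
      rw [Complex.mul_re, Complex.ofReal_im, Complex.ofReal_re, zero_mul, sub_zero]
    rw [this]
    have hnm : 0 < -m := by linarith
    positivity
  have hAB : ((Real.pi:ℂ) / ((ε:ℂ)^2 + 2*V)) * ((Real.pi:ℂ) * ((ε:ℂ)^2+2*V) / (((-m:ℝ)):ℂ))
      = (((Real.pi^2 / (-m) : ℝ)):ℂ) := by
    have hnm : ((-m:ℝ):ℂ) ≠ 0 := Complex.ofReal_ne_zero.mpr (by linarith)
    push_cast
    field_simp [hD0]
  have hx : (0:ℝ) ≤ Real.pi^2/(-m) := by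
    have hnm : 0 < -m := by linarith
    positivity
  have hy : (0:ℝ) ≤ Real.pi * (-m) / (2*ε^2) := by
    have hnm : 0 < -m := by linarith
    positivity
  have h12 : ((Real.pi:ℂ) / ((ε:ℂ)^2 + 2*V)) ^ (1/2:ℂ) *
      ((Real.pi:ℂ) * ((ε:ℂ)^2+2*V) / (((-m:ℝ)):ℂ)) ^ (1/2:ℂ)
      = ((Real.sqrt (Real.pi^2/(-m)) : ℝ) : ℂ) := by
    rw [← mul_cpow_half hA hB, hAB, hcast _ hx]
  have h3c : ((((Real.pi * (-m) / (2*ε^2) : ℝ)):ℂ)) ^ (1/2:ℂ)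
      = ((Real.sqrt (Real.pi * (-m) / (2*ε^2)) : ℝ) : ℂ) := hcast _ hy
  have hscal : ((Real.sqrt (2 / Real.pi ^ 3) : ℝ) : ℂ) * (ε : ℂ) *
      (((Real.sqrt (Real.pi^2/(-m)) : ℝ) : ℂ) * ((Real.sqrt (Real.pi * (-m) / (2*ε^2)) : ℝ) : ℂ)) = 1 := by
    rw [← Complex.ofReal_mul, ← Complex.ofReal_mul, ← Complex.ofReal_mul]
    rw [show (1:ℂ) = ((1:ℝ):ℂ) by norm_cast]
    congr 1
    rw [← Real.sqrt_mul hx, show Real.pi^2/(-m) * (Real.pi*(-m)/(2*ε^2)) = Real.pi^3/(2*ε^2) * ((-m)/(-m)) by ring,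
      div_self (by linarith : (-m:ℝ) ≠ 0), mul_one]
    rw [mul_right_comm, ← Real.sqrt_mul (by positivity : (0:ℝ) ≤ 2/Real.pi^3),
      show 2/Real.pi^3 * (Real.pi^3/(2*ε^2)) = (Real.pi^3/Real.pi^3) * (2/2) * (ε^2)⁻¹ by ring,
      div_self (by positivity : Real.pi^3 ≠ 0), div_self (two_ne_zero : (2:ℝ) ≠ 0), one_mul, one_mul,
      Real.sqrt_inv, Real.sqrt_sq hε.le]
    exact inv_mul_cancel₀ hε.ne'
  have hpref : ((Real.sqrt (2 / Real.pi ^ 3) : ℝ) : ℂ) * (ε : ℂ) *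
      (((Real.pi:ℂ) / ((ε:ℂ)^2 + 2*V)) ^ (1/2:ℂ) *
        (((Real.pi:ℂ) / -(((m:ℝ):ℂ) / ((ε:ℂ)^2+2*V))) ^ (1/2:ℂ) *
          ((Real.pi:ℂ) / -(2*(ε:ℂ)^2/((m:ℝ):ℂ))) ^ (1/2:ℂ))) = 1 := by
    rw [e2, e3]
    linear_combination (((Real.sqrt (2 / Real.pi ^ 3) : ℝ) : ℂ) * (ε : ℂ) *
        ((((Real.pi * (-m) / (2*ε^2) : ℝ)):ℂ) ^ (1/2:ℂ))) * h12 +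
      (((Real.sqrt (2 / Real.pi ^ 3) : ℝ) : ℂ) * (ε : ℂ) *
        (((Real.sqrt (Real.pi^2/(-m)) : ℝ) : ℂ))) * h3c + hscal
  linear_combination Complex.exp (-((s ^ 2 / (2 * ε ^ 2) : ℝ) : ℂ)) * hpref
end

section
/- Setting s = 0 in the previous identity: for any ε > 0, c ∈ ℝ, and w ∈ ℂ with r := Re(w) ≥ 0, one has (√(2/π³))·ε·∫∫∫ exp(−ε²(t²+t'²) − 2iq(t−t')) exp(2i(t−t')c) exp(4tt'r − 2t²w − 2t'²w̄) dq dt dt' = 1. -/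
set_option maxHeartbeats 1000000

open MeasureTheory Complex Real

lemma re_gt_abs_im_cpow_half {z : ℂ} (hz : 0 < z.re) :
    |(z ^ (1/2 : ℂ)).im| < (z ^ (1/2 : ℂ)).re := by
  have hz0 : z ≠ 0 := by rintro rfl; simp at hz
  rw [Complex.cpow_def_of_ne_zero hz0]
  have hhalf : Complex.log z * (1/2 : ℂ) = (((1:ℝ)/2 : ℝ) : ℂ) * Complex.log z := by
    push_cast; ring
  rw [hhalf]
  set L : ℂ := (((1:ℝ)/2 : ℝ) : ℂ) * Complex.log z with hL
  have hLim : L.im = (1/2 : ℝ) * Complex.arg z := by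
    rw [hL, Complex.im_ofReal_mul, Complex.log_im]
  have harg : |Complex.arg z| < π/2 :=
    Complex.abs_arg_lt_pi_div_two_iff.mpr (Or.inl hz)
  have hpi : (0:ℝ) < π := Real.pi_pos
  have hbound : |L.im| < π/4 := by
    rw [hLim, abs_mul, _root_.abs_of_pos (by norm_num : (0:ℝ) < 1/2)]
    linarith
  have habs : |L.im| < π/2 := by linarith
  have h1 : |Real.sin L.im| = Real.sin |L.im| := by
    rcases _root_.abs_cases L.im with ⟨h, h'⟩ | ⟨h, h'⟩
    · rw [h, _root_.abs_of_nonneg (Real.sin_nonneg_of_nonneg_of_le_pi h' (by linarith [abs_nonneg L.im]))]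
    · rw [h, Real.sin_neg]
      refine _root_.abs_of_nonpos ?_
      have : Real.sin L.im ≤ 0 := Real.sin_nonpos_of_nonpos_of_neg_pi_le (le_of_lt h') (by linarith [abs_nonneg L.im, neg_abs_le L.im])
      linarith
  have h2 : Real.sin |L.im| < Real.sin (π/4) :=
    Real.sin_lt_sin_of_lt_of_le_pi_div_two (by linarith [abs_nonneg L.im]) (by linarith) hbound
  have h3 : Real.cos |L.im| ≤ Real.cos L.im := by rw [Real.cos_abs]
  have h4 : Real.sin (π/4) = Real.cos (π/4) := by
    rw [Real.sin_pi_div_four, Real.cos_pi_div_four]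
  have h5 : Real.cos (π/4) ≤ Real.cos |L.im| := by
    rcases eq_or_lt_of_le (abs_nonneg L.im) with h | h
    · rw [← h]
      exact (Real.cos_le_one _).trans_eq (by rw [Real.cos_zero])
    · rcases lt_or_ge |L.im| (π/4) with h' | h'
      · exact le_of_lt (Real.cos_lt_cos_of_nonneg_of_le_pi (abs_nonneg _) (by linarith) h')
      · exact le_of_eq (by rw [le_antisymm h' (le_of_lt hbound)])
  have hsincos : |Real.sin L.im| < Real.cos L.im := by
    rw [h1]; calc Real.sin |L.im| < Real.sin (π/4) := h2
      _ = Real.cos (π/4) := h4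
      _ ≤ Real.cos |L.im| := h5
      _ ≤ Real.cos L.im := h3
  rw [Complex.exp_re, Complex.exp_im, abs_mul, _root_.abs_of_pos (Real.exp_pos _)]
  exact mul_lt_mul_of_pos_left hsincos (Real.exp_pos _)


/-- normalization (non-relativistic causality) of the
non-selective probe: the `s = 0` case of the discard integral equals `1`. -/
theorem discard_triple_gaussian_integral_norm
    (ε c : ℝ) (hε : 0 < ε) (w : ℂ) (hw : 0 ≤ w.re) :
    ((Real.sqrt (2 / Real.pi ^ 3) : ℝ) : ℂ) * (ε : ℂ) *
        ∫ q : ℝ, ∫ t : ℝ, ∫ t' : ℝ,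
          Complex.exp (-(ε : ℂ) ^ 2 * ((t : ℂ) ^ 2 + (t' : ℂ) ^ 2)
              - 2 * Complex.I * (q : ℂ) * ((t : ℂ) - (t' : ℂ))) *
          Complex.exp (2 * Complex.I * ((t : ℂ) - (t' : ℂ)) * (c : ℂ)) *
          Complex.exp (4 * (t : ℂ) * (t' : ℂ) * (w.re : ℂ)
              - 2 * (t : ℂ) ^ 2 * w - 2 * (t' : ℂ) ^ 2 * (starRingEnd ℂ w))
      = 1 := by
  set r : ℝ := w.re with hr
  set m : ℝ := w.im with hm
  have hw2 : w = (r : ℂ) + (m : ℂ) * Complex.I := (Complex.re_add_im w).symm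
  have hconj : (starRingEnd ℂ) w = (r : ℂ) - (m : ℂ) * Complex.I := by
    rw [hw2, map_add, map_mul, Complex.conj_I, Complex.conj_ofReal, Complex.conj_ofReal]; ring
  have hK' : (0:ℝ) < ε^4 + 4*ε^2*r + 4*m^2 := by
    nlinarith [sq_nonneg m, pow_pos hε 4, sq_nonneg ε, pow_pos (pow_pos hε 2) 2]
  obtain ⟨B, hB⟩ : ∃ B : ℂ, B = (ε:ℂ)^2 + 2*(r:ℂ) - 2*(m:ℂ)*Complex.I := ⟨_, rfl⟩
  obtain ⟨K, hK⟩ : ∃ K : ℂ, K = (ε:ℂ)^4 + 4*(ε:ℂ)^2*(r:ℂ) + 4*(m:ℂ)^2 := ⟨_, rfl⟩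
  have hBre : B.re = ε^2 + 2*r := by
    rw [hB]; simp [← Complex.ofReal_pow]
  have hBrepos : 0 < B.re := by rw [hBre]; nlinarith [sq_nonneg ε]
  have hB0 : B ≠ 0 := fun h => by rw [h] at hBrepos; simp at hBrepos
  have hKr : K = ((ε^4 + 4*ε^2*r + 4*m^2 : ℝ) : ℂ) := by rw [hK]; push_cast; ring
  have hK0 : K ≠ 0 := by rw [hKr]; exact_mod_cast ne_of_gt hK'
  have hI2 : Complex.I^2 = -1 := Complex.I_sq
  have hI3 : Complex.I^3 = -Complex.I := by rw [pow_succ, hI2]; ring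
  have hI4 : Complex.I^4 = 1 := by rw [pow_succ, hI3]; simp [Complex.I_mul_I]
  -- denominator-clearing helpers
  have key1 : ∀ (d cc X : ℂ), d*(4*B) + cc^2 = X*4 →
      d - cc^2/(4*-B) = X/B := by
    intro d cc X h
    field_simp
    linear_combination h
  have key2 : ∀ (N A M : ℂ), N*(4*K) + A^2 = M*(4*B) →
      N/B - (A/B)^2/(4*-(K/B)) = M/K := by
    intro N A M h
    have : -(K/B) = (-K)/B := by ring
    rw [this]
    field_simp
    linear_combination h
  -- step 1 : innermost integral over t'
  have step1 : ∀ (q t : ℝ),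
      (∫ t' : ℝ,
          Complex.exp (-(ε : ℂ) ^ 2 * ((t : ℂ) ^ 2 + (t' : ℂ) ^ 2)
              - 2 * Complex.I * (q : ℂ) * ((t : ℂ) - (t' : ℂ))) *
          Complex.exp (2 * Complex.I * ((t : ℂ) - (t' : ℂ)) * (c : ℂ)) *
          Complex.exp (4 * (t : ℂ) * (t' : ℂ) * (r : ℂ)
              - 2 * (t : ℂ) ^ 2 * w - 2 * (t' : ℂ) ^ 2 * (starRingEnd ℂ w)))
      = (↑π / B) ^ (1/2 : ℂ) *
          Complex.exp ((-(K/B)) * (t:ℂ)^2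
            + ((-(2*Complex.I*((q:ℂ)-(c:ℂ))*((ε:ℂ)^2-2*(m:ℂ)*Complex.I)))/B) * (t:ℂ)
            + (-(((q:ℂ)-(c:ℂ))^2))/B) := by
    intro q t
    have h1 : ∀ t' : ℝ,
        Complex.exp (-(ε : ℂ) ^ 2 * ((t : ℂ) ^ 2 + (t' : ℂ) ^ 2)
              - 2 * Complex.I * (q : ℂ) * ((t : ℂ) - (t' : ℂ))) *
          Complex.exp (2 * Complex.I * ((t : ℂ) - (t' : ℂ)) * (c : ℂ)) *
          Complex.exp (4 * (t : ℂ) * (t' : ℂ) * (r : ℂ)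
              - 2 * (t : ℂ) ^ 2 * w - 2 * (t' : ℂ) ^ 2 * (starRingEnd ℂ w))
        = Complex.exp ((-B) * (t':ℂ)^2
            + (2*Complex.I*((q:ℂ)-(c:ℂ)) + 4*(t:ℂ)*(r:ℂ)) * (t':ℂ)
            + (-(ε:ℂ)^2*(t:ℂ)^2 - 2*Complex.I*(q:ℂ)*(t:ℂ) + 2*Complex.I*(t:ℂ)*(c:ℂ)
               - 2*(t:ℂ)^2*((r:ℂ)+(m:ℂ)*Complex.I))) := by
      intro t'
      rw [← Complex.exp_add, ← Complex.exp_add, hconj, hw2, hB]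
      congr 1
      ring
    simp_rw [h1]
    rw [integral_cexp_quadratic (by simpa using hBrepos : (-B).re < 0)]
    rw [neg_neg]
    refine congrArg (fun z => (↑π / B) ^ (1/2 : ℂ) * Complex.exp z) ?_
    have hcomb : (-(K/B)) * (t:ℂ)^2
            + ((-(2*Complex.I*((q:ℂ)-(c:ℂ))*((ε:ℂ)^2-2*(m:ℂ)*Complex.I)))/B) * (t:ℂ)
            + (-(((q:ℂ)-(c:ℂ))^2))/B
        = ((-K) * (t:ℂ)^2
            + (-(2*Complex.I*((q:ℂ)-(c:ℂ))*((ε:ℂ)^2-2*(m:ℂ)*Complex.I))) * (t:ℂ)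
            + (-(((q:ℂ)-(c:ℂ))^2)))/B := by
      rw [← neg_div B K]
      simp only [div_mul_eq_mul_div, ← add_div]
    rw [hcomb]
    apply key1
    rw [hB, hK]
    ring_nf
    simp only [hI2, hI3, hI4]
    ring
  -- step 2 : integral over t
  have step2 : ∀ q : ℝ,
      (∫ t : ℝ, Complex.exp ((-(K/B)) * (t:ℂ)^2
            + ((-(2*Complex.I*((q:ℂ)-(c:ℂ))*((ε:ℂ)^2-2*(m:ℂ)*Complex.I)))/B) * (t:ℂ)
            + (-(((q:ℂ)-(c:ℂ))^2))/B))
      = (↑π / (K/B)) ^ (1/2 : ℂ) *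
          Complex.exp ((-(2*(ε:ℂ)^2/K)) * (q:ℂ)^2 + ((4*(ε:ℂ)^2*(c:ℂ))/K) * (q:ℂ)
            + (-(2*(ε:ℂ)^2*(c:ℂ)^2))/K) := by
    intro q
    have hb2re : (-(K/B)).re < 0 := by
      have h1 : -(K/B) = ((-(ε^4 + 4*ε^2*r + 4*m^2) : ℝ) : ℂ) * B⁻¹ := by
        rw [hKr]; push_cast; ring
      rw [h1, Complex.re_ofReal_mul, Complex.inv_re]
      apply mul_neg_of_neg_of_pos (by linarith)
      exact div_pos hBrepos (Complex.normSq_pos.mpr hB0)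
    rw [integral_cexp_quadratic hb2re, neg_neg]
    refine congrArg (fun z => (↑π / (K/B)) ^ (1/2 : ℂ) * Complex.exp z) ?_
    have hcomb : (-(2*(ε:ℂ)^2/K)) * (q:ℂ)^2 + ((4*(ε:ℂ)^2*(c:ℂ))/K) * (q:ℂ)
            + (-(2*(ε:ℂ)^2*(c:ℂ)^2))/K
        = ((-(2*(ε:ℂ)^2)) * (q:ℂ)^2 + (4*(ε:ℂ)^2*(c:ℂ)) * (q:ℂ)
            + (-(2*(ε:ℂ)^2*(c:ℂ)^2)))/K := by
      rw [neg_div']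
      simp only [div_mul_eq_mul_div, ← add_div]
    rw [hcomb]
    apply key2
    rw [hB, hK]
    ring_nf
    simp only [hI2, hI3, hI4]
    ring
  -- step 3 : integral over q
  have step3 :
      (∫ q : ℝ, Complex.exp ((-(2*(ε:ℂ)^2/K)) * (q:ℂ)^2 + ((4*(ε:ℂ)^2*(c:ℂ))/K) * (q:ℂ)
            + (-(2*(ε:ℂ)^2*(c:ℂ)^2))/K))
      = (↑π / (2*(ε:ℂ)^2/K)) ^ (1/2 : ℂ) := by
    have hb3re : (-(2*(ε:ℂ)^2/K)).re < 0 := by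
      have h1 : -(2*(ε:ℂ)^2/K) = ((-(2*ε^2)/(ε^4 + 4*ε^2*r + 4*m^2) : ℝ) : ℂ) := by
        rw [hKr]; push_cast; ring
      rw [h1, Complex.ofReal_re]
      apply div_neg_of_neg_of_pos _ hK'
      nlinarith [pow_pos hε 2]
    rw [integral_cexp_quadratic hb3re, neg_neg]
    have hε0 : (ε:ℂ) ≠ 0 := Complex.ofReal_ne_zero.mpr (ne_of_gt hε)
    have hexp0 : (-(2*(ε:ℂ)^2*(c:ℂ)^2))/K
        - (((4*(ε:ℂ)^2*(c:ℂ))/K))^2 / (4 * (-(2*(ε:ℂ)^2/K))) = 0 := by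
      have h2 : -(2*(ε:ℂ)^2/K) = (-(2*(ε:ℂ)^2))/K := by ring
      rw [h2]
      field_simp [hK0, hε0]
      ring
    rw [hexp0, Complex.exp_zero, mul_one]
  -- assemble
  simp_rw [step1, MeasureTheory.integral_const_mul, step2, MeasureTheory.integral_const_mul, step3]
  set K' : ℝ := ε^4 + 4*ε^2*r + 4*m^2 with hK'def
  set A₁ : ℂ := (↑π / B) ^ (1/2 : ℂ) with hA1
  set A₂ : ℂ := (↑π / (K/B)) ^ (1/2 : ℂ) with hA2
  -- third factor is a real square root
  have hA3base : (↑π / (2*(ε:ℂ)^2/K)) = ((π * K' / (2*ε^2) : ℝ) : ℂ) := by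
    rw [hKr]
    push_cast
    rw [div_div_eq_mul_div]
  have hA3 : (↑π / (2*(ε:ℂ)^2/K)) ^ (1/2 : ℂ) = ((Real.sqrt (π * K' / (2*ε^2)) : ℝ) : ℂ) := by
    rw [hA3base, show ((1:ℂ)/2) = (((1/2 : ℝ)) : ℂ) by norm_num,
      ← Complex.ofReal_cpow (by positivity), Real.sqrt_eq_rpow]
  have hπ0 : (↑π : ℂ) ≠ 0 := Complex.ofReal_ne_zero.mpr Real.pi_ne_zero
  have hz1 : (↑π / B) ≠ 0 := div_ne_zero hπ0 hB0
  have hz2 : (↑π / (K/B)) ≠ 0 := div_ne_zero hπ0 (div_ne_zero hK0 hB0)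
  have hA1sq : A₁ * A₁ = ↑π / B := by
    rw [hA1, ← Complex.cpow_add _ _ hz1]
    norm_num
  have hA2sq : A₂ * A₂ = ↑π / (K/B) := by
    rw [hA2, ← Complex.cpow_add _ _ hz2]
    norm_num
  have hXsq : (A₁*A₂)*(A₁*A₂) = ↑π^2/K := by
    calc (A₁*A₂)*(A₁*A₂) = (A₁*A₁)*(A₂*A₂) := by ring
    _ = (↑π/B)*(↑π/(K/B)) := by rw [hA1sq, hA2sq]
    _ = ↑π^2/K := by
        field_simp
  have hre1 : 0 < (↑π/B).re := by
    rw [div_eq_mul_inv, Complex.re_ofReal_mul]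
    exact mul_pos Real.pi_pos
      (by rw [Complex.inv_re]; exact div_pos hBrepos (Complex.normSq_pos.mpr hB0))
  have hre2 : 0 < (↑π/(K/B)).re := by
    have h1 : ↑π/(K/B) = ((π/K' : ℝ):ℂ) * B := by
      rw [hKr]; push_cast; field_simp
    rw [h1, Complex.re_ofReal_mul]
    exact mul_pos (div_pos Real.pi_pos hK') hBrepos
  have hA1r : |A₁.im| < A₁.re := by rw [hA1]; exact re_gt_abs_im_cpow_half hre1
  have hA2r : |A₂.im| < A₂.re := by rw [hA2]; exact re_gt_abs_im_cpow_half hre2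
  have hXre : 0 < (A₁*A₂).re := by
    rw [Complex.mul_re]
    have h := mul_lt_mul'' hA1r hA2r (abs_nonneg _) (abs_nonneg _)
    have h2 : A₁.im * A₂.im ≤ |A₁.im| * |A₂.im| := by
      rw [← abs_mul]; exact le_abs_self _
    linarith
  have hYr : (π / Real.sqrt K') * (π / Real.sqrt K') = π^2/K' := by
    rw [div_mul_div_comm, Real.mul_self_sqrt (le_of_lt hK')]; ring
  have hY : ((π / Real.sqrt K' : ℝ):ℂ) * ((π / Real.sqrt K' : ℝ):ℂ) = ↑π^2/K := by
    rw [← Complex.ofReal_mul, hYr, hKr]; push_cast; ring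
  have hX : A₁ * A₂ = ((π / Real.sqrt K' : ℝ):ℂ) := by
    have hfac : (A₁*A₂ - ((π / Real.sqrt K' : ℝ):ℂ)) * (A₁*A₂ + ((π / Real.sqrt K' : ℝ):ℂ)) = 0 := by
      linear_combination hXsq - hY
    rcases mul_eq_zero.mp hfac with h | h
    · exact sub_eq_zero.mp h
    · exfalso
      have h' : A₁*A₂ = -((π / Real.sqrt K' : ℝ):ℂ) := eq_neg_of_add_eq_zero_left h
      have hre : (A₁*A₂).re = -(π / Real.sqrt K') := by rw [h']; simp
      have hpos : 0 < π / Real.sqrt K' := div_pos Real.pi_pos (Real.sqrt_pos.mpr hK')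
      rw [hre] at hXre
      linarith
  rw [← mul_assoc A₁ A₂, hX, hA3, ← Complex.ofReal_mul, ← Complex.ofReal_mul, ← Complex.ofReal_mul,
    show (1:ℂ) = ((1:ℝ):ℂ) from by norm_num, Complex.ofReal_inj]
  have hπp := Real.pi_pos
  have hval2 : (Real.sqrt (2/π^3) * ε * (π/Real.sqrt K' * Real.sqrt (π*K'/(2*ε^2))))^2 = 1 := by
    rw [mul_pow, mul_pow, mul_pow, div_pow, Real.sq_sqrt (by positivity),
      Real.sq_sqrt (le_of_lt hK'), Real.sq_sqrt (by positivity)]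
    field_simp
  have hnn : 0 ≤ Real.sqrt (2/π^3) * ε * (π/Real.sqrt K' * Real.sqrt (π*K'/(2*ε^2))) := by positivity
  have hfin : (Real.sqrt (2/π^3) * ε * (π/Real.sqrt K' * Real.sqrt (π*K'/(2*ε^2))) - 1) *
      (Real.sqrt (2/π^3) * ε * (π/Real.sqrt K' * Real.sqrt (π*K'/(2*ε^2))) + 1) = 0 := by
    linear_combination hval2
  rcases mul_eq_zero.mp hfin with h | h
  · linarith [sub_eq_zero.mp h]
  · linarith
end

section
/- Let M be a complex symmetric n×n matrix whose Hermitian (real) part is positive definite. Then ∫_{ℝⁿ} exp(−tᵀ M t) dt converges absolutely and equals √(πⁿ / det M), where the square root is determined by analytic continuation from real positive definite M. -/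
open MeasureTheory Matrix Complex

noncomputable section

def Qc {k : ℕ} (M : Matrix (Fin k) (Fin k) ℂ) (t : Fin k → ℝ) : ℂ :=
  ∑ i, ∑ j, (t i : ℂ) * M i j * (t j : ℂ)

lemma re_Qc {k : ℕ} (M : Matrix (Fin k) (Fin k) ℂ) (t : Fin k → ℝ) :
    (Qc M t).re = ∑ i, ∑ j, t i * (M i j).re * t j := by
  simp [Qc, Complex.re_sum, Complex.mul_re, Complex.mul_im]

lemma re_sq_div_le {a β : ℂ} (ha : 0 < a.re) : (β ^ 2 / a).re ≤ β.re ^ 2 / a.re := by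
  have hns : 0 < Complex.normSq a := by
    have : a ≠ 0 := fun h => by simp [h] at ha
    exact Complex.normSq_pos.mpr this
  rw [Complex.div_re, Complex.normSq_apply]
  have h1 : 0 < a.re * a.re + a.im * a.im := by rwa [Complex.normSq_apply] at hns
  rw [← add_div, div_le_div_iff₀ h1 ha]
  have h2 : (β ^ 2).re = β.re * β.re - β.im * β.im := by
    simp [pow_two, Complex.mul_re]
  have h3 : (β ^ 2).im = β.re * β.im + β.im * β.re := by
    simp [pow_two, Complex.mul_im]
  rw [h2, h3]
  nlinarith [sq_nonneg (β.re * a.im - β.im * a.re), sq_nonneg β.re, ha.le]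

def finOneSumEquiv (n : ℕ) : Fin 1 ⊕ Fin n ≃ Fin (n + 1) where
  toFun := Sum.elim (fun _ => 0) Fin.succ
  invFun := Fin.cases (Sum.inl 0) Sum.inr
  left_inv := by
    rintro (i | j)
    · have : i = 0 := Subsingleton.elim i 0
      subst this; simp
    · simp
  right_inv := by
    intro i
    induction i using Fin.cases <;> simp

lemma det_schur {n : ℕ} (M : Matrix (Fin (n + 1)) (Fin (n + 1)) ℂ) (ha : M 0 0 ≠ 0) :
    M.det = M 0 0 *
      (Matrix.of fun i j : Fin n =>
        M i.succ j.succ - M i.succ 0 * M 0 j.succ / M 0 0).det := by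
  set A1 : Matrix (Fin 1) (Fin 1) ℂ := Matrix.of fun _ _ => M 0 0 with hA1
  set B1 : Matrix (Fin 1) (Fin n) ℂ := Matrix.of fun _ j => M 0 j.succ
  set C1 : Matrix (Fin n) (Fin 1) ℂ := Matrix.of fun i _ => M i.succ 0
  set D1 : Matrix (Fin n) (Fin n) ℂ := Matrix.of fun i j => M i.succ j.succ
  letI : Invertible A1 :=
    ⟨Matrix.of fun _ _ => (M 0 0)⁻¹,
      by ext i j; simp [Matrix.mul_apply, A1, inv_mul_cancel₀ ha, Subsingleton.elim i j, Matrix.one_apply],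
      by ext i j; simp [Matrix.mul_apply, A1, mul_inv_cancel₀ ha, Subsingleton.elim i j, Matrix.one_apply]⟩
  have hsub : M.submatrix (finOneSumEquiv n) (finOneSumEquiv n) = fromBlocks A1 B1 C1 D1 := by
    ext i j
    rcases i with i | i <;> rcases j with j | j <;>
      simp [finOneSumEquiv, fromBlocks, A1, B1, C1, D1]
  have h1 : M.det = (fromBlocks A1 B1 C1 D1).det := by
    rw [← Matrix.det_submatrix_equiv_self (finOneSumEquiv n) M, hsub]
  rw [h1, Matrix.det_fromBlocks₁₁]
  congr 1
  · simp [A1, Matrix.det_fin_one]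
  · congr 1
    ext i j
    simp [D1, C1, B1, hA1, Matrix.mul_apply, Fin.sum_univ_succ]
    ring

lemma Qc_cons {n : ℕ} (M : Matrix (Fin (n + 1)) (Fin (n + 1)) ℂ)
    (hsymm : ∀ i j, M i j = M j i) (x : ℝ) (y : Fin n → ℝ) :
    Qc M (Fin.cons x y) =
      M 0 0 * (x : ℂ) ^ 2 + (2 * ∑ j, M 0 j.succ * (y j : ℂ)) * (x : ℂ)
        + Qc (M.submatrix Fin.succ Fin.succ) y := by
  simp only [Qc, Fin.sum_univ_succ, Fin.cons_zero, Fin.cons_succ, Matrix.submatrix_apply]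
  have hs : ∀ i : Fin n, M i.succ 0 = M 0 i.succ := fun i => hsymm _ _
  simp only [hs]
  rw [Finset.sum_add_distrib]
  have e1 : (2 * ∑ j, M 0 j.succ * (y j : ℂ)) * (x : ℂ) =
      (∑ j, (x : ℂ) * M 0 j.succ * (y j : ℂ)) + ∑ i, (y i : ℂ) * M 0 i.succ * (x : ℂ) := by
    rw [two_mul, add_mul, Finset.sum_mul]
    congr 1 <;> refine Finset.sum_congr rfl fun i _ => by ring
  rw [e1]; ring

lemma sum_sum_factor {n : ℕ} (b : Fin n → ℂ) (y : Fin n → ℝ) (a : ℂ) :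
    ∑ i, ∑ j, (y i : ℂ) * (b i * b j / a) * (y j : ℂ) =
      (∑ j, b j * (y j : ℂ)) ^ 2 / a := by
  rw [sq, Finset.sum_mul_sum, Finset.sum_div]
  refine Finset.sum_congr rfl fun i _ => ?_
  rw [Finset.sum_div]
  exact Finset.sum_congr rfl fun j _ => by ring

lemma Qc_schur {n : ℕ} (C : Matrix (Fin n) (Fin n) ℂ) (b : Fin n → ℂ) (a : ℂ)
    (y : Fin n → ℝ) :
    Qc (Matrix.of fun i j => C i j - b i * b j / a) y =
      Qc C y - (∑ j, b j * (y j : ℂ)) ^ 2 / a := by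
  simp only [Qc, Matrix.of_apply]
  rw [← sum_sum_factor b y a, ← Finset.sum_sub_distrib]
  refine Finset.sum_congr rfl fun i _ => ?_
  rw [← Finset.sum_sub_distrib]
  refine Finset.sum_congr rfl fun j _ => by ring

lemma re_Qc_cons {n : ℕ} (M : Matrix (Fin (n + 1)) (Fin (n + 1)) ℂ)
    (hsymm : ∀ i j, M i j = M j i) (x : ℝ) (y : Fin n → ℝ) :
    (Qc M (Fin.cons x y)).re =
      (M 0 0).re * x ^ 2 + 2 * (∑ j, M 0 j.succ * (y j : ℂ)).re * x
        + (Qc (M.submatrix Fin.succ Fin.succ) y).re := by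
  rw [Qc_cons M hsymm]
  simp [Complex.add_re, Complex.mul_re, Complex.mul_im, ← Complex.ofReal_pow,
    Complex.ofReal_re, Complex.ofReal_im]

lemma Qc_single {k : ℕ} (M : Matrix (Fin k) (Fin k) ℂ) (i : Fin k) :
    Qc M (Pi.single i 1) = M i i := by
  simp [Qc, Pi.single_apply, apply_ite Complex.ofReal, ite_mul, mul_ite,
    Finset.sum_ite_eq]

lemma Qc_map {k : ℕ} (R : Matrix (Fin k) (Fin k) ℝ) (t : Fin k → ℝ) :
    Qc (R.map Complex.ofReal) t = ((∑ i, ∑ j, t i * R i j * t j : ℝ) : ℂ) := by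
  simp [Qc, Matrix.map_apply]

lemma real_schur_sum {n : ℕ} (C : Matrix (Fin n) (Fin n) ℝ) (br : Fin n → ℝ) (α : ℝ)
    (y : Fin n → ℝ) :
    ∑ i, ∑ j, y i * (C i j - br i * br j / α) * y j =
      (∑ i, ∑ j, y i * C i j * y j) - (∑ j, br j * y j) ^ 2 / α := by
  have h : ∑ i, ∑ j, y i * (br i * br j / α) * y j = (∑ j, br j * y j) ^ 2 / α := by
    rw [sq, Finset.sum_mul_sum, Finset.sum_div]
    refine Finset.sum_congr rfl fun i _ => ?_
    rw [Finset.sum_div]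
    exact Finset.sum_congr rfl fun j _ => by ring
  rw [← h, ← Finset.sum_sub_distrib]
  refine Finset.sum_congr rfl fun i _ => ?_
  rw [← Finset.sum_sub_distrib]
  exact Finset.sum_congr rfl fun j _ => by ring

lemma gauss_main : ∀ (n : ℕ) (M : Matrix (Fin n) (Fin n) ℂ),
    (∀ i j, M i j = M j i) → (∀ t : Fin n → ℝ, t ≠ 0 → 0 < (Qc M t).re) →
    Integrable (fun t : Fin n → ℝ => Complex.exp (-Qc M t)) ∧
      (∫ t : Fin n → ℝ, Complex.exp (-Qc M t)) ^ 2 = (Real.pi : ℂ) ^ n / M.det := by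
  intro n
  induction n with
  | zero =>
    intro M _ _
    have h : (fun t : Fin 0 → ℝ => Complex.exp (-Qc M t)) = fun _ => 1 := by
      funext t; simp [Qc]
    haveI : IsProbabilityMeasure (volume : Measure (Fin 0 → ℝ)) := by
      constructor
      rw [MeasureTheory.volume_pi, Measure.pi_univ]
      simp
    rw [h]
    exact ⟨integrable_const 1, by simp [Matrix.det_isEmpty]⟩
  | succ n IH =>
    intro M hsymm hpos
    set a : ℂ := M 0 0 with ha_def
    set Cm : Matrix (Fin n) (Fin n) ℂ := M.submatrix Fin.succ Fin.succ with hCm_def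
    set b : Fin n → ℂ := fun j => M 0 j.succ with hb_def
    set β : (Fin n → ℝ) → ℂ := fun y => ∑ j, b j * (y j : ℂ) with hβ_def
    have haRe : 0 < a.re := by
      have h1 : (Pi.single 0 1 : Fin (n+1) → ℝ) ≠ 0 := fun h => by
        simpa using congrFun h 0
      have := hpos _ h1
      rwa [Qc_single M 0] at this
    have ha0 : a ≠ 0 := fun h => by simp [h] at haRe
    set N : Matrix (Fin n) (Fin n) ℂ :=
      Matrix.of fun i j => Cm i j - b i * b j / a with hN_def
    -- the key strict inequality
    have key : ∀ y : Fin n → ℝ, y ≠ 0 → (β y).re ^ 2 / a.re < (Qc Cm y).re := by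
      intro y hy
      set x : ℝ := -(β y).re / a.re with hx_def
      have hcons : (Fin.cons x y : Fin (n+1) → ℝ) ≠ 0 := fun h =>
        hy (funext fun j => by simpa using congrFun h j.succ)
      have h0 := hpos _ hcons
      rw [re_Qc_cons M hsymm] at h0
      have hβre : (∑ j, M 0 j.succ * ((y j : ℝ) : ℂ)).re = (β y).re := rfl
      rw [hβre] at h0
      have hval : a.re * x ^ 2 + 2 * (β y).re * x = -((β y).re ^ 2 / a.re) := by
        rw [hx_def]; field_simp; ring
      nlinarith [h0, hval]
    -- positivity for N
    have posN : ∀ y : Fin n → ℝ, y ≠ 0 → 0 < (Qc N y).re := by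
      intro y hy
      have hk := key y hy
      have h1 := re_sq_div_le (β := β y) haRe
      have h2 : Qc N y = Qc Cm y - (β y) ^ 2 / a := Qc_schur Cm b a y
      rw [h2, Complex.sub_re]
      linarith
    have hNsymm : ∀ i j, N i j = N j i := by
      intro i j
      simp only [hN_def, Matrix.of_apply, hCm_def, Matrix.submatrix_apply, hb_def]
      rw [hsymm i.succ j.succ, mul_comm]
    obtain ⟨intN, sqN⟩ := IH N hNsymm posN
    -- real Schur complement (for the norm bound)
    set A2 : Matrix (Fin n) (Fin n) ℝ :=
      Matrix.of fun i j => (Cm i j).re - (b i).re * (b j).re / a.re with hA2_def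
    have hβre : ∀ y : Fin n → ℝ, (β y).re = ∑ j, (b j).re * y j := by
      intro y
      simp [hβ_def, Complex.re_sum, Complex.mul_re]
    have hA2Q : ∀ y : Fin n → ℝ,
        ∑ i, ∑ j, y i * A2 i j * y j = (Qc Cm y).re - (β y).re ^ 2 / a.re := by
      intro y
      rw [hA2_def]
      simp only [Matrix.of_apply]
      exact (real_schur_sum _ _ _ _).trans (by rw [← re_Qc, hβre])
    have posA2 : ∀ y : Fin n → ℝ, y ≠ 0 → 0 < (Qc (A2.map Complex.ofReal) y).re := by
      intro y hy
      rw [Qc_map, Complex.ofReal_re, hA2Q]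
      have := key y hy
      linarith
    have symA2 : ∀ i j, (A2.map Complex.ofReal) i j = (A2.map Complex.ofReal) j i := by
      intro i j
      simp only [Matrix.map_apply, hA2_def, Matrix.of_apply, hCm_def, Matrix.submatrix_apply]
      rw [hsymm i.succ j.succ, mul_comm ((M 0 i.succ).re)]
    obtain ⟨intA2, -⟩ := IH (A2.map Complex.ofReal) symA2 posA2
    have normA2 : ∀ y : Fin n → ℝ, ‖Complex.exp (-(Qc (A2.map Complex.ofReal) y))‖ =
        Real.exp ((β y).re ^ 2 / a.re - (Qc Cm y).re) := by
      intro y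
      rw [Complex.norm_exp, Complex.neg_re, Qc_map, Complex.ofReal_re,
        hA2Q]
      ring_nf
    -- the function on the product space
    set F : ℝ × (Fin n → ℝ) → ℂ := fun p => Complex.exp (-Qc M (Fin.cons p.1 p.2))
      with hF_def
    have hFeq : ∀ (x : ℝ) (y : Fin n → ℝ),
        F (x, y) = Complex.exp (-a * (x:ℂ)^2 + -(2 * β y) * (x:ℂ) + -(Qc Cm y)) := by
      intro x y
      rw [hF_def]
      simp only
      rw [Qc_cons M hsymm]
      congr 1
      ring
    have hFcont : Continuous F := by
      have h1 : Continuous fun p : ℝ × (Fin n → ℝ) => Qc M (Fin.cons p.1 p.2) := by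
        have : (fun p : ℝ × (Fin n → ℝ) => Qc M (Fin.cons p.1 p.2)) =
            fun p => a * (p.1:ℂ)^2 + (2 * β p.2) * (p.1:ℂ) + Qc Cm p.2 := by
          funext p; rw [Qc_cons M hsymm]
        rw [this]
        refine ((Continuous.add ?_ ?_).add ?_)
        · fun_prop
        · refine Continuous.mul (Continuous.mul continuous_const ?_) ?_
          · exact continuous_finset_sum _ fun j _ =>
              continuous_const.mul (Complex.continuous_ofReal.comp
                ((continuous_apply j).comp continuous_snd))
          · fun_prop
        · exact continuous_finset_sum _ fun i _ => continuous_finset_sum _ fun j _ =>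
            ((Complex.continuous_ofReal.comp ((continuous_apply i).comp
              continuous_snd)).mul continuous_const).mul
              (Complex.continuous_ofReal.comp ((continuous_apply j).comp continuous_snd))
      exact Complex.continuous_exp.comp h1.neg
    have hnormF : ∀ (x : ℝ) (y : Fin n → ℝ),
        ‖F (x, y)‖ = Real.exp (-(a.re * x^2 + 2 * (β y).re * x + (Qc Cm y).re)) := by
      intro x y
      rw [hF_def]
      simp only
      rw [Complex.norm_exp, Complex.neg_re, re_Qc_cons M hsymm]
    have intF : Integrable F ((volume : Measure ℝ).prod (volume : Measure (Fin n → ℝ))) := by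
      rw [integrable_prod_iff' hFcont.aestronglyMeasurable]
      constructor
      · refine ae_of_all _ fun y => ?_
        have h := integrable_cexp_quadratic' (b := -a) (by simpa using haRe)
          (-(2 * β y)) (-(Qc Cm y))
        refine h.congr (ae_of_all _ fun x => ?_)
        exact (hFeq x y).symm
      · have hxint : ∀ y : Fin n → ℝ, (∫ x : ℝ, ‖F (x, y)‖) =
            Real.sqrt (Real.pi / a.re) *
              Real.exp ((β y).re ^ 2 / a.re - (Qc Cm y).re) := by
          intro y
          have hb' : ((-(a.re : ℂ))).re < 0 := by simpa using haRe
          have h1 : ((∫ x : ℝ, ‖F (x, y)‖ : ℝ) : ℂ) =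
              ∫ x : ℝ, Complex.exp ((-(a.re:ℂ)) * (x:ℂ)^2 +
                ((-(2 * (β y).re) : ℝ) : ℂ) * (x:ℂ) + ((-((Qc Cm y).re) : ℝ) : ℂ)) := by
            have h1a : ((∫ x : ℝ, ‖F (x, y)‖ : ℝ) : ℂ) = ∫ x : ℝ, (‖F (x, y)‖ : ℂ) :=
              (integral_ofReal (𝕜 := ℂ)).symm
            rw [h1a]
            refine integral_congr_ae (ae_of_all _ fun x => ?_)
            simp only [hnormF, ← Complex.ofReal_exp]
            congr 1
            push_cast
            ring
          rw [integral_cexp_quadratic hb'] at h1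
          have h2 : ((Real.pi : ℂ) / -(-(a.re:ℂ))) ^ ((1:ℂ)/2) =
              ((Real.sqrt (Real.pi / a.re) : ℝ) : ℂ) := by
            rw [neg_neg, Real.sqrt_eq_rpow,
              Complex.ofReal_cpow (div_nonneg Real.pi_pos.le haRe.le)]
            push_cast
            norm_num
          rw [h2] at h1
          have h3 : (((-((Qc Cm y).re) : ℝ)) : ℂ) -
              (((-(2 * (β y).re) : ℝ)) : ℂ)^2 / (4 * (-(a.re:ℂ))) =
              (((β y).re ^ 2 / a.re - (Qc Cm y).re : ℝ) : ℂ) := by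
            push_cast
            field_simp
            ring
          rw [h3, ← Complex.ofReal_exp, ← Complex.ofReal_mul] at h1
          exact_mod_cast h1
        have heq : (fun y : Fin n → ℝ => ∫ x : ℝ, ‖F (x, y)‖) =
            fun y => Real.sqrt (Real.pi / a.re) *
              ‖Complex.exp (-(Qc (A2.map Complex.ofReal) y))‖ := by
          funext y
          rw [hxint, normA2]
        rw [heq]
        exact (intA2.norm.const_mul _)
    -- transfer along the measurable equivalence
    set e := MeasurableEquiv.piFinSuccAbove (fun _ : Fin (n+1) => ℝ) 0 with he_def
    have ψ := volume_preserving_piFinSuccAbove (fun _ : Fin (n+1) => ℝ) 0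
    have hcomp : (fun t : Fin (n+1) → ℝ => Complex.exp (-Qc M t)) = F ∘ e := by
      funext t
      show Complex.exp (-Qc M t) =
        F (t 0, fun j => t ((0 : Fin (n+1)).succAbove j))
      rw [hF_def]
      simp only [Fin.zero_succAbove]
      congr 1
      rw [show (fun j : Fin n => t j.succ) = Fin.tail t from rfl, Fin.cons_self_tail]
    have intFvol : Integrable F (volume : Measure (ℝ × (Fin n → ℝ))) := by
      rw [Measure.volume_eq_prod]; exact intF
    have intf : Integrable (fun t : Fin (n+1) → ℝ => Complex.exp (-Qc M t)) := by
      rw [hcomp]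
      exact (ψ.integrable_comp_emb (MeasurableEquiv.measurableEmbedding e)).mpr intFvol
    have hInner : ∀ y : Fin n → ℝ, (∫ x : ℝ, F (x, y)) =
        ((Real.pi : ℂ) / a) ^ ((1:ℂ)/2) * Complex.exp (-Qc N y) := by
      intro y
      have h2 : (fun x : ℝ => F (x, y)) =
          fun x : ℝ => Complex.exp (-a * (x:ℂ)^2 + -(2 * β y) * (x:ℂ) + -(Qc Cm y)) :=
        funext fun x => hFeq x y
      rw [h2, integral_cexp_quadratic (show (-a).re < 0 by simpa using haRe)]
      rw [neg_neg]
      congr 1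
      rw [hN_def]
      rw [Qc_schur Cm b a y]
      rw [show (∑ j, b j * ((y j : ℝ) : ℂ)) = β y from rfl]
      field_simp
      ring
    have hIval : (∫ t : Fin (n+1) → ℝ, Complex.exp (-Qc M t)) =
        ((Real.pi : ℂ) / a) ^ ((1:ℂ)/2) * ∫ y : Fin n → ℝ, Complex.exp (-Qc N y) := by
      have h4 : (∫ t : Fin (n+1) → ℝ, Complex.exp (-Qc M t)) =
          ∫ p : ℝ × (Fin n → ℝ), F p := by
        rw [hcomp]
        exact ψ.integral_comp (MeasurableEquiv.measurableEmbedding e) F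
      rw [h4, Measure.volume_eq_prod, integral_prod_symm F intF]
      simp_rw [hInner]
      rw [integral_const_mul]
    have hdet : M.det = a * N.det := by
      have hNe : N = Matrix.of fun i j : Fin n =>
          M i.succ j.succ - M i.succ 0 * M 0 j.succ / M 0 0 := by
        ext i j
        simp only [hN_def, Matrix.of_apply, hCm_def, Matrix.submatrix_apply, hb_def]
        rw [hsymm i.succ 0]
      rw [det_schur M ha0, ← hNe]
    have hπa : (Real.pi : ℂ) / a ≠ 0 :=
      div_ne_zero (by exact_mod_cast Real.pi_ne_zero) ha0
    have hc2 : (((Real.pi : ℂ) / a) ^ ((1:ℂ)/2)) ^ 2 = (Real.pi : ℂ) / a := by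
      rw [sq, ← Complex.cpow_add _ _ hπa]
      norm_num
    refine ⟨intf, ?_⟩
    rw [hIval, mul_pow, sqN, hc2, hdet, div_mul_div_comm, pow_succ]
    congr 1
    ring

lemma Qc_split {n : ℕ} (A B : Matrix (Fin n) (Fin n) ℝ) (c : ℂ) (t : Fin n → ℝ) :
    Qc (A.map Complex.ofReal + c • B.map Complex.ofReal) t =
      Qc (A.map Complex.ofReal) t + c * Qc (B.map Complex.ofReal) t := by
  simp only [Qc, Matrix.add_apply, Matrix.smul_apply, smul_eq_mul]
  rw [Finset.mul_sum, ← Finset.sum_add_distrib]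
  refine Finset.sum_congr rfl fun i _ => ?_
  rw [Finset.mul_sum, ← Finset.sum_add_distrib]
  exact Finset.sum_congr rfl fun j _ => by ring

/-- for a complex symmetric matrix `M = A + iB` with positive
definite real part `A`, the Gaussian integral `∫ exp(−tᵀMt) dt` converges
absolutely and equals `√(πⁿ/det M)`, the square root being fixed by analytic
continuation along the path `s ↦ A + isB` from the real positive definite
matrix `A`. -/
theorem complex_gaussian_integral
    {n : ℕ} (A B : Matrix (Fin n) (Fin n) ℝ)
    (hA : A.PosDef) (hAs : A.IsSymm) (hB : B.IsSymm)
    (M : Matrix (Fin n) (Fin n) ℂ)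
    (hM : M = A.map Complex.ofReal + Complex.I • B.map Complex.ofReal) :
    Integrable (fun t : Fin n → ℝ =>
        Complex.exp (- ∑ i, ∑ j, (t i : ℂ) * M i j * (t j : ℂ))) ∧
    ∃ d : ℂ, d ^ 2 = (Real.pi : ℂ) ^ n / M.det ∧
      (∃ g : ℝ → ℂ, ContinuousOn g (Set.Icc 0 1) ∧
        (∀ s ∈ Set.Icc (0 : ℝ) 1,
          g s ^ 2 = (Real.pi : ℂ) ^ n
            / (A.map Complex.ofReal + ((s : ℂ) * Complex.I) • B.map Complex.ofReal).det) ∧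
        g 0 = ((Real.sqrt (Real.pi ^ n / A.det) : ℝ) : ℂ) ∧ g 1 = d) ∧
      (∫ t : Fin n → ℝ,
          Complex.exp (- ∑ i, ∑ j, (t i : ℂ) * M i j * (t j : ℂ))) = d := by
  have hA' : ∀ i j, A i j = A j i := fun i j => hAs.apply j i
  have hB' : ∀ i j, B i j = B j i := fun i j => hB.apply j i
  set Ms : ℝ → Matrix (Fin n) (Fin n) ℂ :=
    fun s => A.map Complex.ofReal + ((s : ℂ) * Complex.I) • B.map Complex.ofReal with hMs_def
  have hsym : ∀ (s : ℝ) (i j : Fin n), Ms s i j = Ms s j i := by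
    intro s i j
    simp only [hMs_def, Matrix.add_apply, Matrix.smul_apply, Matrix.map_apply, smul_eq_mul]
    rw [hA' i j, hB' i j]
  have hre : ∀ (s : ℝ) (t : Fin n → ℝ),
      (Qc (Ms s) t).re = ∑ i, ∑ j, t i * A i j * t j := by
    intro s t
    rw [re_Qc]
    refine Finset.sum_congr rfl fun i _ => Finset.sum_congr rfl fun j _ => ?_
    simp [hMs_def, Matrix.add_apply, Matrix.smul_apply, Matrix.map_apply,
      Complex.add_re, Complex.mul_re, Complex.I_re, Complex.I_im]
  have hposA : ∀ t : Fin n → ℝ, t ≠ 0 → 0 < ∑ i, ∑ j, t i * A i j * t j := by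
    intro t ht
    have h := hA.dotProduct_mulVec_pos ht
    simpa [dotProduct, Matrix.mulVec, Finset.mul_sum, mul_assoc] using h
  have hpos : ∀ (s : ℝ) (t : Fin n → ℝ), t ≠ 0 → 0 < (Qc (Ms s) t).re := fun s t ht => by
    rw [hre]; exact hposA t ht
  have main := fun s : ℝ => gauss_main n (Ms s) (hsym s) (hpos s)
  have hM1 : M = Ms 1 := by rw [hM]; simp [hMs_def]
  set g : ℝ → ℂ := fun s => ∫ t : Fin n → ℝ, Complex.exp (-Qc (Ms s) t) with hg_def
  constructor
  · rw [hM1]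
    exact (main 1).1
  · refine ⟨g 1, ?_, ⟨g, ?_, ?_, ?_, rfl⟩, ?_⟩
    · rw [hM1]
      exact (main 1).2
    · -- continuity
      rw [hg_def]
      apply continuousOn_of_dominated
        (bound := fun t : Fin n → ℝ => Real.exp (-(∑ i, ∑ j, t i * A i j * t j)))
      · intro s _
        exact (main s).1.aestronglyMeasurable
      · intro s _
        refine ae_of_all _ fun t => le_of_eq ?_
        rw [Complex.norm_exp, Complex.neg_re, hre s t]
      · have h0 := (main 0).1.norm
        refine h0.congr (ae_of_all _ fun t => ?_)
        show ‖Complex.exp (-Qc (Ms 0) t)‖ = _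
        rw [Complex.norm_exp, Complex.neg_re, hre 0 t]
      · refine ae_of_all _ fun t => Continuous.continuousOn ?_
        have hfun : (fun s : ℝ => Complex.exp (-Qc (Ms s) t)) =
            fun s : ℝ => Complex.exp (-(Qc (A.map Complex.ofReal) t +
              ((s : ℂ) * Complex.I) * Qc (B.map Complex.ofReal) t)) := by
          funext s
          rw [hMs_def]
          simp only
          rw [Qc_split]
        rw [hfun]
        fun_prop
    · intro s _
      exact (main s).2
    · -- value at 0
      have hM0 : Ms 0 = A.map Complex.ofReal := by
        rw [hMs_def]; simp
      have hg0 : g 0 = ((∫ t : Fin n → ℝ,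
          Real.exp (-(∑ i, ∑ j, t i * A i j * t j)) : ℝ) : ℂ) := by
        rw [hg_def]
        simp only
        have heq : ∀ t : Fin n → ℝ, Complex.exp (-Qc (Ms 0) t) =
            ((Real.exp (-(∑ i, ∑ j, t i * A i j * t j)) : ℝ) : ℂ) := fun t => by
          rw [hM0, Qc_map, ← Complex.ofReal_neg, Complex.ofReal_exp]
        rw [integral_congr_ae (ae_of_all _ heq)]
        exact integral_ofReal (𝕜 := ℂ)
      set r : ℝ := ∫ t : Fin n → ℝ, Real.exp (-(∑ i, ∑ j, t i * A i j * t j)) with hr_def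
      have hr0 : 0 ≤ r := integral_nonneg fun t => (Real.exp_pos _).le
      have hdet : (A.map Complex.ofReal).det = ((A.det : ℝ) : ℂ) :=
        (RingHom.map_det Complex.ofRealHom A).symm
      have hrsq : r ^ 2 = Real.pi ^ n / A.det := by
        have h0 := (main 0).2
        rw [show (∫ t : Fin n → ℝ, Complex.exp (-Qc (Ms 0) t)) = g 0 from rfl, hg0,
          hM0, hdet] at h0
        have h0' : (((r ^ 2 : ℝ)) : ℂ) = (((Real.pi ^ n / A.det : ℝ)) : ℂ) := by
          push_cast
          rw [← h0]
        exact_mod_cast h0'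
      rw [hg0, ← hrsq, Real.sqrt_sq hr0]
    · rw [hM1]
      rfl

end
end
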